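/- arXiv:2210.15325 — 8 statements merged into one kernel-verified Lean document; each statement's English description precedes it below -/
import Mathlib

section
/- For the complete bipartite graph K_{n,n} with n ≥ 2, gpack(K_{n,n}) = ⌊2n/3⌋. -/
open SimpleGraph

/-- A geodesic (shortest path) in `G`: a path whose length equals the distance
between its endpoints. -/
def IsGeodesic {V : Type*} (G : SimpleGraph V) {u v : V} (p : G.Walk u v) : Prop :=
  p.IsPath ∧ p.length = G.dist u v

/-- A maximal geodesic: a geodesic that is not contained as a subpath of any longer
geodesic, equivalently it cannot be extended at either end to a longer geodesic. -/
def IsMaxGeodesic {V : Type*} (G : SimpleGraph V) {u v : V} (p : G.Walk u v) : Prop :=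
  IsGeodesic G p ∧
  (∀ w (h : G.Adj w u), ¬ IsGeodesic G (SimpleGraph.Walk.cons h p)) ∧
  (∀ w (h : G.Adj v w), ¬ IsGeodesic G (p.concat h))

/-- A set of vertices that is the vertex set of some maximal geodesic of `G`. -/
def IsMaxGeodesicSet {V : Type*} (G : SimpleGraph V) (s : Set V) : Prop :=
  ∃ (u v : V) (p : G.Walk u v), IsMaxGeodesic G p ∧ s = {x | x ∈ p.support}

/-- A geodesic packing: a family of pairwise vertex-disjoint maximal geodesics. -/
def IsGeodesicPacking {V : Type*} (G : SimpleGraph V) (P : Set (Set V)) : Prop :=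
  (∀ s ∈ P, IsMaxGeodesicSet G s) ∧ P.Pairwise Disjoint

/-- The geodesic packing number `gpack(G)`. -/
noncomputable def gpackNum {V : Type*} (G : SimpleGraph V) : ℕ :=
  sSup {k | ∃ P : Finset (Set V), IsGeodesicPacking G ↑P ∧ P.card = k}

/-- A geodesic transversal: a vertex set hitting every maximal geodesic. -/
def IsGeodesicTransversal {V : Type*} (G : SimpleGraph V) (S : Set V) : Prop :=
  ∀ s, IsMaxGeodesicSet G s → (S ∩ s).Nonempty

/-- The geodesic transversal number `gt(G)`. -/
noncomputable def gtransNum {V : Type*} (G : SimpleGraph V) : ℕ :=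
  sInf {k | ∃ S : Finset V, IsGeodesicTransversal G ↑S ∧ S.card = k}

namespace GpackAux

variable {n : ℕ}

abbrev B (n : ℕ) : SimpleGraph (Fin n ⊕ Fin n) := completeBipartiteGraph (Fin n) (Fin n)

lemma adj_lr (i j : Fin n) : (B n).Adj (Sum.inl i) (Sum.inr j) := by simp
lemma adj_rl (i j : Fin n) : (B n).Adj (Sum.inr j) (Sum.inl i) := by simp

lemma dist_lr (i j : Fin n) : (B n).dist (Sum.inl i) (Sum.inr j) = 1 :=
  SimpleGraph.dist_eq_one_iff_adj.mpr (adj_lr i j)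

lemma dist_rl (i j : Fin n) : (B n).dist (Sum.inr j) (Sum.inl i) = 1 :=
  SimpleGraph.dist_eq_one_iff_adj.mpr (adj_rl i j)

lemma dist_ll (hn : 0 < n) {i i' : Fin n} (h : i ≠ i') :
    (B n).dist (Sum.inl i) (Sum.inl i') = 2 := by
  let w : (B n).Walk (Sum.inl i) (Sum.inl i') :=
    .cons (adj_lr i ⟨0, hn⟩) (.cons (adj_rl i' ⟨0, hn⟩) .nil)
  have h2 : (B n).dist (Sum.inl i) (Sum.inl i') ≤ 2 := by
    simpa [w] using SimpleGraph.dist_le w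
  have h0 : (B n).dist (Sum.inl i) (Sum.inl i') ≠ 0 := by
    intro hc
    rcases SimpleGraph.dist_eq_zero_iff_eq_or_not_reachable.mp hc with hc | hc
    · exact h (Sum.inl.inj hc)
    · exact hc ⟨w⟩
  have h1 : (B n).dist (Sum.inl i) (Sum.inl i') ≠ 1 := by
    intro hc
    have := SimpleGraph.dist_eq_one_iff_adj.mp hc
    simp at this
  omega

lemma dist_rr (hn : 0 < n) {j j' : Fin n} (h : j ≠ j') :
    (B n).dist (Sum.inr j) (Sum.inr j') = 2 := by
  let w : (B n).Walk (Sum.inr j) (Sum.inr j') :=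
    .cons (adj_rl ⟨0, hn⟩ j) (.cons (adj_lr ⟨0, hn⟩ j') .nil)
  have h2 : (B n).dist (Sum.inr j) (Sum.inr j') ≤ 2 := by
    simpa [w] using SimpleGraph.dist_le w
  have h0 : (B n).dist (Sum.inr j) (Sum.inr j') ≠ 0 := by
    intro hc
    rcases SimpleGraph.dist_eq_zero_iff_eq_or_not_reachable.mp hc with hc | hc
    · exact h (Sum.inr.inj hc)
    · exact hc ⟨w⟩
  have h1 : (B n).dist (Sum.inr j) (Sum.inr j') ≠ 1 := by
    intro hc
    have := SimpleGraph.dist_eq_one_iff_adj.mp hc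
    simp at this
  omega

lemma dist_le_two (hn : 0 < n) (u v : Fin n ⊕ Fin n) : (B n).dist u v ≤ 2 := by
  rcases u with i | i <;> rcases v with j | j
  · by_cases h : i = j
    · subst h; rw [SimpleGraph.dist_self]; omega
    · rw [dist_ll hn h]
  · rw [dist_lr]; omega
  · rw [dist_rl]; omega
  · by_cases h : i = j
    · subst h; rw [SimpleGraph.dist_self]; omega
    · rw [dist_rr hn h]

lemma isMaxGeoSet_left (hn : 0 < n) (i i' j : Fin n) (h : i ≠ i') :
    IsMaxGeodesicSet (B n) {Sum.inl i, Sum.inr j, Sum.inl i'} := by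
  refine ⟨Sum.inl i, Sum.inl i',
    .cons (adj_lr i j) (.cons (adj_rl i' j) .nil), ⟨⟨?_, ?_⟩, ?_, ?_⟩, ?_⟩
  · simp [SimpleGraph.Walk.isPath_def, h]
  · simp [dist_ll hn h]
  · rintro (k | k) hw ⟨-, hlen⟩
    · simp at hw
    · rw [dist_rl] at hlen
      simp at hlen
  · rintro (k | k) hw ⟨-, hlen⟩
    · simp at hw
    · rw [SimpleGraph.Walk.length_concat, dist_lr] at hlen
      simp at hlen
  · ext x
    simp [or_assoc]

lemma isMaxGeoSet_right (hn : 0 < n) (j j' i : Fin n) (h : j ≠ j') :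
    IsMaxGeodesicSet (B n) {Sum.inr j, Sum.inl i, Sum.inr j'} := by
  refine ⟨Sum.inr j, Sum.inr j',
    .cons (adj_rl i j) (.cons (adj_lr i j') .nil), ⟨⟨?_, ?_⟩, ?_, ?_⟩, ?_⟩
  · simp [SimpleGraph.Walk.isPath_def, h]
  · simp [dist_rr hn h]
  · rintro (k | k) hw ⟨-, hlen⟩
    · rw [dist_lr] at hlen
      simp at hlen
    · simp at hw
  · rintro (k | k) hw ⟨-, hlen⟩
    · rw [SimpleGraph.Walk.length_concat, dist_rl] at hlen
      simp at hlen
    · simp at hw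
  · ext x
    simp [or_assoc]

lemma other_ne (hn : 2 ≤ n) (i : Fin n) : ∃ i' : Fin n, i' ≠ i := by
  by_cases h : i = ⟨0, by omega⟩
  · exact ⟨⟨1, by omega⟩, by simp [h, Fin.ext_iff]⟩
  · exact ⟨⟨0, by omega⟩, fun hc => h hc.symm⟩

lemma maxGeo_eq_triple (hn : 2 ≤ n) {s : Set (Fin n ⊕ Fin n)}
    (hs : IsMaxGeodesicSet (B n) s) :
    ∃ x y z, x ≠ y ∧ x ≠ z ∧ y ≠ z ∧ s = {x, y, z} := by
  obtain ⟨u, v, p, ⟨⟨hpath, hlen⟩, hcons, hconcat⟩, rfl⟩ := hs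
  have hn0 : 0 < n := by omega
  have hle2 : p.length ≤ 2 := hlen ▸ dist_le_two hn0 u v
  have hne0 : p.length ≠ 0 := by
    intro h0
    obtain rfl : u = v := SimpleGraph.Walk.eq_of_length_eq_zero h0
    rw [SimpleGraph.Walk.length_eq_zero_iff, SimpleGraph.Walk.nil_iff_eq_nil] at h0
    subst h0
    rcases u with i | i
    · exact hcons (Sum.inr i) (adj_rl i i)
        ⟨by simp [SimpleGraph.Walk.isPath_def], by simp [dist_rl]⟩
    · exact hcons (Sum.inl i) (adj_lr i i)
        ⟨by simp [SimpleGraph.Walk.isPath_def], by simp [dist_lr]⟩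
  have hne1 : p.length ≠ 1 := by
    intro h1
    cases p with
    | nil => simp at h1
    | cons h' q =>
      rename_i x
      have hq0 : q.length = 0 := by simpa using h1
      obtain rfl : x = v := SimpleGraph.Walk.eq_of_length_eq_zero hq0
      rw [SimpleGraph.Walk.length_eq_zero_iff, SimpleGraph.Walk.nil_iff_eq_nil] at hq0
      subst hq0
      rcases u with i | i <;> rcases x with j | j
      · simp at h'
      · -- u = inl i, v = inr j : extend to inl i'
        obtain ⟨i', hi'⟩ := other_ne hn i
        exact hconcat (Sum.inl i') (adj_rl i' j)
          ⟨by simp [SimpleGraph.Walk.concat_cons, SimpleGraph.Walk.concat_nil,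
              SimpleGraph.Walk.isPath_def, hi'.symm],
           by simp [SimpleGraph.Walk.concat_cons, SimpleGraph.Walk.concat_nil,
              dist_ll hn0 (Ne.symm hi')]⟩
      · obtain ⟨j', hj'⟩ := other_ne hn i
        exact hconcat (Sum.inr j') (adj_lr j j')
          ⟨by simp [SimpleGraph.Walk.concat_cons, SimpleGraph.Walk.concat_nil,
              SimpleGraph.Walk.isPath_def, Ne.symm hj'],
           by simp [SimpleGraph.Walk.concat_cons, SimpleGraph.Walk.concat_nil,
              dist_rr hn0 (Ne.symm hj')]⟩
      · simp at h'
  have h2 : p.length = 2 := by omega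
  cases p with
  | nil => simp at h2
  | cons ha q =>
    cases q with
    | nil => simp at h2
    | cons hb r =>
      rename_i x y
      have hr0 : r.length = 0 := by simpa using h2
      obtain rfl : y = v := SimpleGraph.Walk.eq_of_length_eq_zero hr0
      rw [SimpleGraph.Walk.length_eq_zero_iff, SimpleGraph.Walk.nil_iff_eq_nil] at hr0
      subst hr0
      rw [SimpleGraph.Walk.isPath_def] at hpath
      simp at hpath
      exact ⟨u, x, y, hpath.1.1, hpath.1.2, hpath.2, by ext z; simp [or_assoc]⟩

lemma packing_card_le (hn : 2 ≤ n) (P : Finset (Set (Fin n ⊕ Fin n)))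
    (hP : IsGeodesicPacking (B n) ↑P) : P.card ≤ 2 * n / 3 := by
  classical
  set g : Set (Fin n ⊕ Fin n) → Finset (Fin n ⊕ Fin n) :=
    fun s => (Set.toFinite s).toFinset with hg
  have hcard : ∀ s ∈ P, (g s).card = 3 := by
    intro s hs
    obtain ⟨x, y, z, hxy, hxz, hyz, rfl⟩ := maxGeo_eq_triple hn (hP.1 s (by exact_mod_cast hs))
    have : g {x, y, z} = {x, y, z} := by
      ext w
      rw [hg]
      simp only [Set.Finite.mem_toFinset, Set.mem_insert_iff, Set.mem_singleton_iff,
        Finset.mem_insert, Finset.mem_singleton]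
    rw [this, Finset.card_eq_three]
    exact ⟨x, y, z, hxy, hxz, hyz, rfl⟩
  have hdisj : ∀ s ∈ P, ∀ t ∈ P, s ≠ t → Disjoint (g s) (g t) := by
    intro s hs t ht hst
    have hd : Disjoint s t := hP.2 (by exact_mod_cast hs) (by exact_mod_cast ht) hst
    rw [Finset.disjoint_left]
    intro x hx hx'
    simp [hg] at hx hx'
    exact Set.disjoint_left.mp hd hx hx'
  have h1 : (P.biUnion g).card = 3 * P.card := by
    rw [Finset.card_biUnion hdisj]
    rw [Finset.sum_congr rfl hcard]
    simp [Nat.mul_comm]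
  have h2 : (P.biUnion g).card ≤ Fintype.card (Fin n ⊕ Fin n) := Finset.card_le_univ _
  simp at h2
  omega

def lv (hn : 0 < n) (c : ℕ) : Fin n ⊕ Fin n := Sum.inl ⟨min c (n-1), by omega⟩

def rv (hn : 0 < n) (c : ℕ) : Fin n ⊕ Fin n := Sum.inr ⟨min c (n-1), by omega⟩

lemma exists_packing (hn : 2 ≤ n) :
    ∃ P : Finset (Set (Fin n ⊕ Fin n)),
      IsGeodesicPacking (B n) ↑P ∧ P.card = 2 * n / 3 := by
  classical
  have hn0 : 0 < n := by omega
  obtain ⟨k, hk⟩ : ∃ k : ℕ, k = 2 * n / 3 := ⟨_, rfl⟩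
  obtain ⟨a, ha⟩ : ∃ a : ℕ, a = (k + 1) / 2 := ⟨_, rfl⟩
  obtain ⟨b, hb⟩ : ∃ b : ℕ, b = k / 2 := ⟨_, rfl⟩
  have hab : a + b = k := by omega
  have h1 : 2 * a + b ≤ n := by omega
  have h2 : a + 2 * b ≤ n := by omega
  set f : ℕ → Set (Fin n ⊕ Fin n) := fun m =>
    if m < a then {lv hn0 (2*m), rv hn0 m, lv hn0 (2*m+1)}
    else {rv hn0 (a+2*(m-a)), lv hn0 (2*a+(m-a)), rv hn0 (a+2*(m-a)+1)} with hf
  have hdisj : ∀ m < k, ∀ m' < k, m ≠ m' → Disjoint (f m) (f m') := by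
    intro m hm m' hm' hmm
    rw [Set.disjoint_left]
    intro x hx hx'
    simp only [hf] at hx hx'
    split_ifs at hx hx' <;>
      (rcases hx with rfl | rfl | rfl <;>
        simp only [Set.mem_insert_iff, Set.mem_singleton_iff, lv, rv,
          Sum.inl.injEq, Sum.inr.injEq, Fin.mk.injEq, reduceCtorEq,
          false_or, or_false] at hx' <;>
        omega)
  have hmem : ∀ m < k, IsMaxGeodesicSet (B n) (f m) := by
    intro m hm
    simp only [hf]
    split_ifs with h
    · exact isMaxGeoSet_left hn0 _ _ _ (by
        simp only [ne_eq, Fin.mk.injEq]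
        omega)
    · exact isMaxGeoSet_right hn0 _ _ _ (by
        simp only [ne_eq, Fin.mk.injEq]
        omega)
  have hne : ∀ m, (f m).Nonempty := by
    intro m
    simp only [hf]
    split_ifs <;> exact ⟨_, Set.mem_insert _ _⟩
  have hinj : Set.InjOn f ↑(Finset.range k) := by
    intro m hm m' hm' heq
    by_contra hne'
    simp only [Finset.coe_range, Set.mem_Iio] at hm hm'
    obtain ⟨x, hx⟩ := hne m
    exact Set.disjoint_left.mp (hdisj m hm m' hm' hne') hx (heq ▸ hx)
  subst hk
  refine ⟨(Finset.range (2 * n / 3)).image f, ⟨?_, ?_⟩, ?_⟩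
  · intro s hs
    simp only [Finset.coe_image, Set.mem_image, Finset.coe_range, Set.mem_Iio] at hs
    obtain ⟨m, hm, rfl⟩ := hs
    exact hmem m hm
  · intro s hs t ht hst
    simp only [Finset.coe_image, Set.mem_image, Finset.coe_range, Set.mem_Iio] at hs ht
    obtain ⟨m, hm, rfl⟩ := hs
    obtain ⟨m', hm', rfl⟩ := ht
    exact hdisj m hm m' hm' (fun hc => hst (by rw [hc]))
  · rw [Finset.card_image_of_injOn hinj, Finset.card_range]

end GpackAux

theorem gpack_completeBipartite (n : ℕ) (hn : 2 ≤ n) :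
    gpackNum (completeBipartiteGraph (Fin n) (Fin n)) = 2 * n / 3 := by
  rw [gpackNum]
  apply le_antisymm
  · apply csSup_le
    · exact ⟨0, ∅, ⟨by simp, by simp⟩, by simp⟩
    · rintro x ⟨P, hP, rfl⟩
      exact GpackAux.packing_card_le hn P hP
  · obtain ⟨P, hP, hc⟩ := GpackAux.exists_packing hn
    exact le_csSup ⟨2 * n / 3, by rintro x ⟨Q, hQ, rfl⟩; exact GpackAux.packing_card_le hn Q hQ⟩
      ⟨P, hP, hc⟩
end

section
/- For the complete bipartite graph K_{n,n} with n ≥ 2, the geodesic transversal number satisfies gt(K_{n,n}) = n. -/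
open SimpleGraph

namespace GtKnnAux

open Sum SimpleGraph Walk

variable {n : ℕ}

lemma dist_lr (a b : Fin n) :
    (completeBipartiteGraph (Fin n) (Fin n)).dist (inl a) (inr b) = 1 := by
  simp [ne_eq, SimpleGraph.dist_eq_one_iff_adj]

lemma dist_rl (a b : Fin n) :
    (completeBipartiteGraph (Fin n) (Fin n)).dist (inr b) (inl a) = 1 := by
  simp [ne_eq, SimpleGraph.dist_eq_one_iff_adj]

lemma adj_lr (a b : Fin n) :
    (completeBipartiteGraph (Fin n) (Fin n)).Adj (inl a) (inr b) := by simp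

lemma adj_rl (a b : Fin n) :
    (completeBipartiteGraph (Fin n) (Fin n)).Adj (inr b) (inl a) := by simp

lemma dist_ll (a c : Fin n) (h : a ≠ c) :
    (completeBipartiteGraph (Fin n) (Fin n)).dist (inl a) (inl c) = 2 := by
  have hle : (completeBipartiteGraph (Fin n) (Fin n)).dist (inl a) (inl c) ≤ 2 := by
    have := SimpleGraph.dist_le (Walk.cons (adj_lr a a) (Walk.cons (adj_rl c a) Walk.nil))
    simpa using this
  have h1 : (completeBipartiteGraph (Fin n) (Fin n)).dist (inl a) (inl c) ≠ 1 := by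
    simp [ne_eq, SimpleGraph.dist_eq_one_iff_adj]
  have h0 : 0 < (completeBipartiteGraph (Fin n) (Fin n)).dist (inl a) (inl c) := by
    refine SimpleGraph.Reachable.pos_dist_of_ne
      ⟨Walk.cons (adj_lr a a) (Walk.cons (adj_rl c a) Walk.nil)⟩ (by simp [h])
  omega

lemma dist_rr (a c : Fin n) (h : a ≠ c) :
    (completeBipartiteGraph (Fin n) (Fin n)).dist (inr a) (inr c) = 2 := by
  have hle : (completeBipartiteGraph (Fin n) (Fin n)).dist (inr a) (inr c) ≤ 2 := by
    have := SimpleGraph.dist_le (Walk.cons (adj_rl a a) (Walk.cons (adj_lr a c) Walk.nil))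
    simpa using this
  have h1 : (completeBipartiteGraph (Fin n) (Fin n)).dist (inr a) (inr c) ≠ 1 := by
    simp [ne_eq, SimpleGraph.dist_eq_one_iff_adj]
  have h0 : 0 < (completeBipartiteGraph (Fin n) (Fin n)).dist (inr a) (inr c) := by
    refine SimpleGraph.Reachable.pos_dist_of_ne
      ⟨Walk.cons (adj_rl a a) (Walk.cons (adj_lr a c) Walk.nil)⟩ (by simp [h])
  omega

lemma maxGeo_left (a b c : Fin n) (hac : a ≠ c) :
    IsMaxGeodesic (completeBipartiteGraph (Fin n) (Fin n))
      (Walk.cons (adj_lr a b) (Walk.cons (adj_rl c b) Walk.nil)) := by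
  refine ⟨⟨?_, by simp [dist_ll a c hac]⟩, ?_, ?_⟩
  · simp [Walk.isPath_def, hac]
  · rintro w h ⟨_, hlen⟩
    cases w with
    | inl d => simp at h
    | inr d => simp [dist_rl, Walk.length_cons] at hlen
  · rintro w h ⟨_, hlen⟩
    cases w with
    | inl d => simp at h
    | inr d => simp [dist_lr, Walk.length_concat] at hlen

lemma maxGeo_right (a b c : Fin n) (hac : a ≠ c) :
    IsMaxGeodesic (completeBipartiteGraph (Fin n) (Fin n))
      (Walk.cons (adj_rl b a) (Walk.cons (adj_lr b c) Walk.nil)) := by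
  refine ⟨⟨?_, by simp [dist_rr a c hac]⟩, ?_, ?_⟩
  · simp [Walk.isPath_def, hac]
  · rintro w h ⟨_, hlen⟩
    cases w with
    | inr d => simp at h
    | inl d => simp [dist_lr, Walk.length_cons] at hlen
  · rintro w h ⟨_, hlen⟩
    cases w with
    | inr d => simp at h
    | inl d => simp [dist_rl, Walk.length_concat] at hlen

/-- Every maximal geodesic in `K_{n,n}` (`n ≥ 1`) contains a left vertex. -/
lemma exists_inl_mem_support (hn : 1 ≤ n) {u v : Fin n ⊕ Fin n}
    {p : (completeBipartiteGraph (Fin n) (Fin n)).Walk u v}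
    (hp : IsMaxGeodesic (completeBipartiteGraph (Fin n) (Fin n)) p) :
    ∃ a : Fin n, inl a ∈ p.support := by
  cases p with
  | nil =>
    cases u with
    | inl a => exact ⟨a, by simp⟩
    | inr b =>
      exfalso
      refine hp.2.1 (inl ⟨0, hn⟩) (adj_lr _ _) ⟨?_, ?_⟩
      · simp [Walk.isPath_def]
      · simp [dist_lr]
  | @cons _ x _ h q =>
    cases u with
    | inl a => exact ⟨a, by simp⟩
    | inr b =>
      cases x with
      | inl a => exact ⟨a, by simp⟩
      | inr d => simp at h

end GtKnnAux

theorem gt_completeBipartite (n : ℕ) (hn : 2 ≤ n) :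
    gtransNum (completeBipartiteGraph (Fin n) (Fin n)) = n := by
  classical
  open Sum GtKnnAux in
  -- the left side is a transversal of size n
  set G := completeBipartiteGraph (Fin n) (Fin n) with hG
  set T : Finset (Fin n ⊕ Fin n) := Finset.univ.image Sum.inl with hT
  have hTcard : T.card = n := by
    rw [hT, Finset.card_image_of_injective _ Sum.inl_injective, Finset.card_univ, Fintype.card_fin]
  have hTtrans : IsGeodesicTransversal G ↑T := by
    rintro s ⟨u, v, p, hmax, rfl⟩
    obtain ⟨a, ha⟩ := exists_inl_mem_support (by omega) hmax
    exact ⟨inl a, by simp [hT], ha⟩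
  have hmem : n ∈ {k | ∃ S : Finset (Fin n ⊕ Fin n),
      IsGeodesicTransversal G ↑S ∧ S.card = k} := ⟨T, hTtrans, hTcard⟩
  refine le_antisymm (Nat.sInf_le hmem) (le_csInf ⟨n, hmem⟩ ?_)
  rintro k ⟨S, hS, rfl⟩
  by_contra hlt
  push_neg at hlt
  -- split S into its left and right parts
  set A : Finset (Fin n) := Finset.univ.filter (fun a => inl a ∈ S) with hA
  set B : Finset (Fin n) := Finset.univ.filter (fun b => inr b ∈ S) with hB
  have hcard : A.card + B.card = S.card := by
    have hun : A.image Sum.inl ∪ B.image Sum.inr = S := by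
      ext x
      cases x <;> simp [hA, hB]
    have hdisj : Disjoint (A.image (Sum.inl : Fin n → Fin n ⊕ Fin n)) (B.image Sum.inr) := by
      simp [Finset.disjoint_left]
    calc A.card + B.card
        = (A.image (Sum.inl : Fin n → Fin n ⊕ Fin n)).card + (B.image Sum.inr).card := by
          rw [Finset.card_image_of_injective _ Sum.inl_injective,
            Finset.card_image_of_injective _ Sum.inr_injective]
      _ = (A.image Sum.inl ∪ B.image Sum.inr).card := (Finset.card_union_of_disjoint hdisj).symm
      _ = S.card := by rw [hun]
  have hAle : A.card ≤ n := (Finset.card_le_univ A).trans_eq (by simp)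
  have hBle : B.card ≤ n := (Finset.card_le_univ B).trans_eq (by simp)
  have hcase : A.card + 1 < n ∨ B.card + 1 < n := by omega
  cases hcase with
  | inl hAsmall =>
    -- two left vertices outside A
    have h2 : 1 < (Finset.univ \ A).card := by
      rw [Finset.card_sdiff_of_subset (Finset.subset_univ A)]
      simp only [Finset.card_univ, Fintype.card_fin]
      omega
    obtain ⟨a, haA, c, hcA, hac⟩ := Finset.one_lt_card.mp h2
    have hBne : (Finset.univ \ B).Nonempty := by
      rw [← Finset.card_pos, Finset.card_sdiff_of_subset (Finset.subset_univ B)]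
      simp only [Finset.card_univ, Fintype.card_fin]
      omega
    obtain ⟨b, hbB⟩ := hBne
    simp only [Finset.mem_sdiff, Finset.mem_univ, true_and, hA, hB,
      Finset.mem_filter] at haA hcA hbB
    obtain ⟨x, hxS, hxs⟩ := hS _ ⟨_, _, _, maxGeo_left a b c hac, rfl⟩
    simp only [Set.mem_setOf_eq, Walk.support_cons, Walk.support_nil,
      List.mem_cons, List.mem_singleton] at hxs
    rcases hxs with rfl | rfl | rfl | h
    · exact haA (by simpa using hxS)
    · exact hbB (by simpa using hxS)
    · exact hcA (by simpa using hxS)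
    · simp at h
  | inr hBsmall =>
    have h2 : 1 < (Finset.univ \ B).card := by
      rw [Finset.card_sdiff_of_subset (Finset.subset_univ B)]
      simp only [Finset.card_univ, Fintype.card_fin]
      omega
    obtain ⟨a, haB, c, hcB, hac⟩ := Finset.one_lt_card.mp h2
    have hAne : (Finset.univ \ A).Nonempty := by
      rw [← Finset.card_pos, Finset.card_sdiff_of_subset (Finset.subset_univ A)]
      simp only [Finset.card_univ, Fintype.card_fin]
      omega
    obtain ⟨b, hbA⟩ := hAne
    simp only [Finset.mem_sdiff, Finset.mem_univ, true_and, hA, hB,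
      Finset.mem_filter] at haB hcB hbA
    obtain ⟨x, hxS, hxs⟩ := hS _ ⟨_, _, _, maxGeo_right a b c hac, rfl⟩
    simp only [Set.mem_setOf_eq, Walk.support_cons, Walk.support_nil,
      List.mem_cons, List.mem_singleton] at hxs
    rcases hxs with rfl | rfl | rfl | h
    · exact haB (by simpa using hxS)
    · exact hbA (by simpa using hxS)
    · exact hcB (by simpa using hxS)
    · simp at h
end

section
/- Let S be a subset of vertices of the rook's graph K_n □ K_n (n ≥ 2) such that S contains no three vertices (g,h), (g',h), (g,h') with g ≠ g' and h ≠ h'. Then |S| ≤ 2n − 2. -/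
open SimpleGraph

theorem rook_noGeodesic_card_le (n : ℕ) (hn : 2 ≤ n) (S : Finset (Fin n × Fin n))
    (hS : ¬ ∃ g g' h h' : Fin n, g ≠ g' ∧ h ≠ h' ∧
      (g, h) ∈ S ∧ (g', h) ∈ S ∧ (g, h') ∈ S) :
    S.card ≤ 2 * n - 2 := by
  classical
  push_neg at hS
  by_contra hcard
  push_neg at hcard
  have hScard : 2 * n - 1 ≤ S.card := by omega
  set A : Finset (Fin n × Fin n) := S.filter (fun p => ∀ q ∈ S, q.1 = p.1 → q = p) with hAdef
  set B : Finset (Fin n × Fin n) := S \ A with hBdef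
  have hAsub : A ⊆ S := Finset.filter_subset _ _
  -- every point of B is alone in its column
  have hBcol : ∀ p ∈ B, ∀ q ∈ S, q.2 = p.2 → q = p := by
    intro p hp q hq hq2
    have hpS : p ∈ S := (Finset.mem_sdiff.mp hp).1
    have hpA : p ∉ A := (Finset.mem_sdiff.mp hp).2
    by_contra hne
    simp only [hAdef, Finset.mem_filter, not_and, not_forall] at hpA
    obtain ⟨r, hrS, hr1, hrne⟩ := hpA hpS
    have hgg : p.1 ≠ q.1 := by
      intro h1
      exact hne (Prod.ext h1.symm hq2)
    have hhh : p.2 ≠ r.2 := by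
      intro h2
      exact hrne (Prod.ext hr1 h2.symm)
    exact hS p.1 q.1 p.2 r.2 hgg hhh (by simpa using hpS)
      (by rw [show ((q.1, p.2) : Fin n × Fin n) = q from Prod.ext rfl hq2.symm]; exact hq)
      (by rw [show ((p.1, r.2) : Fin n × Fin n) = r from Prod.ext hr1.symm rfl]; exact hrS)
  have hAinj : Set.InjOn Prod.fst (↑A : Set (Fin n × Fin n)) := by
    intro p hp q hq h1
    exact (Finset.mem_filter.mp hq).2 p (hAsub hp) h1
  have hBinj : Set.InjOn Prod.snd (↑B : Set (Fin n × Fin n)) := by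
    intro p hp q hq h2
    exact hBcol q hq p ((Finset.mem_sdiff.mp hp).1) h2
  have hAcard : A.card ≤ n := by
    have := Finset.card_le_card_of_injOn Prod.fst
      (fun a _ => Finset.mem_univ (α := Fin n) a.1) hAinj
    simpa using this
  have hsum : S.card = A.card + B.card := by
    have h1 := Finset.card_sdiff_of_subset hAsub
    rw [← hBdef] at h1
    have hle := Finset.card_le_card hAsub
    omega
  -- image of snd on B
  have himB : (B.image Prod.snd).card = B.card := Finset.card_image_of_injOn hBinj
  have hBcard : B.card ≤ n := by
    have := Finset.card_le_card (Finset.subset_univ (B.image Prod.snd))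
    simpa [himB] using this
  have hAne : A.Nonempty := by
    rw [← Finset.card_pos]; omega
  obtain ⟨a0, ha0⟩ := hAne
  -- columns of A avoid columns of B
  have hdisj : ∀ p ∈ A, p.2 ∉ B.image Prod.snd := by
    intro p hp hmem
    obtain ⟨q, hq, hq2⟩ := Finset.mem_image.mp hmem
    have : p = q := hBcol q hq p (hAsub hp) hq2.symm
    exact (Finset.mem_sdiff.mp hq).2 (this ▸ hp)
  -- hence all of A lies in a single column a0.2
  have hAcol : ∀ p ∈ A, p.2 = a0.2 := by
    intro p hp
    have hsubset : A.image Prod.snd ⊆ Finset.univ \ B.image Prod.snd := by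
      intro h hh
      obtain ⟨q, hq, hq2⟩ := Finset.mem_image.mp hh
      exact Finset.mem_sdiff.mpr ⟨Finset.mem_univ _, hq2 ▸ hdisj q hq⟩
    have hcard1 : (Finset.univ \ B.image Prod.snd).card ≤ 1 := by
      have := Finset.card_sdiff_of_subset (Finset.subset_univ (B.image Prod.snd))
      have hn : (Finset.univ : Finset (Fin n)).card = n := by simp
      omega
    have h1 := Finset.card_le_one.mp
      (le_trans (Finset.card_le_card hsubset) hcard1)
    exact h1 _ (Finset.mem_image_of_mem _ hp) _ (Finset.mem_image_of_mem _ ha0)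
  -- columns of B avoid a0.2, so B.card ≤ n - 1
  have hBcard' : B.card ≤ n - 1 := by
    have hsubset : B.image Prod.snd ⊆ Finset.univ.erase a0.2 := by
      intro h hh
      refine Finset.mem_erase.mpr ⟨?_, Finset.mem_univ _⟩
      intro heq
      exact hdisj a0 ha0 (heq ▸ hh)
    have := Finset.card_le_card hsubset
    have herase : (Finset.univ.erase a0.2).card = n - 1 := by
      rw [Finset.card_erase_of_mem (Finset.mem_univ _)]; simp
    omega
  have hAn : A.card = n := by omega
  -- A meets every row, in column a0.2
  have hAuniv : ∀ g : Fin n, ((g, a0.2) : Fin n × Fin n) ∈ S := by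
    intro g
    have himA : (A.image Prod.fst).card = A.card := Finset.card_image_of_injOn hAinj
    have : A.image Prod.fst = Finset.univ := by
      apply Finset.eq_univ_of_card
      simp [himA, hAn]
    have hg : g ∈ A.image Prod.fst := this ▸ Finset.mem_univ g
    obtain ⟨p, hp, hp1⟩ := Finset.mem_image.mp hg
    have : p = (g, a0.2) := Prod.ext hp1 (hAcol p hp)
    exact this ▸ hAsub hp
  have hBne : B.Nonempty := by
    rw [← Finset.card_pos]; omega
  obtain ⟨b, hb⟩ := hBne
  have hb2 : b.2 ≠ a0.2 := by
    intro heq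
    exact hdisj a0 ha0 (heq ▸ Finset.mem_image_of_mem _ hb)
  obtain ⟨g', hg'⟩ := Fintype.exists_ne_of_one_lt_card (by simp; omega) b.1
  exact hS b.1 g' a0.2 b.2 (Ne.symm hg') (Ne.symm hb2) (hAuniv b.1) (hAuniv g')
    (by simpa using (Finset.mem_sdiff.mp hb).1)
end

section
/- If G₁, …, G_r (r ≥ 1) are uniform geodesic graphs, then their Cartesian product G₁ □ ⋯ □ G_r is a uniform geodesic graph. -/
open SimpleGraph

/-- The Cartesian product of an indexed family of graphs. -/
def cartProdIndexed {I : Type*} {W : I → Type*} (G : (i : I) → SimpleGraph (W i)) :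
    SimpleGraph ((i : I) → W i) where
  Adj x y := ∃ i, (G i).Adj (x i) (y i) ∧ ∀ j, j ≠ i → x j = y j
  symm := by
    constructor
    rintro x y ⟨i, hadj, h⟩
    exact ⟨i, hadj.symm, fun j hj => (h j hj).symm⟩
  loopless := by
    constructor
    rintro x ⟨i, hadj, _⟩
    exact (G i).irrefl hadj

/-- A uniform geodesic graph: connected, and every maximal geodesic has length
equal to the diameter. -/
def UniformGeodesic {V : Type*} (G : SimpleGraph V) : Prop :=
  G.Connected ∧ ∀ (u v : V) (p : G.Walk u v), IsMaxGeodesic G p → p.length = G.diam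

/-! ### Auxiliary lemmas -/

section Aux

variable {V : Type*} {G : SimpleGraph V}

lemma isGeodesic_reverse {u v : V} {p : G.Walk u v} (hp : IsGeodesic G p) :
    IsGeodesic G p.reverse :=
  ⟨hp.1.reverse, by rw [SimpleGraph.Walk.length_reverse, hp.2, SimpleGraph.dist_comm]⟩

lemma cons_geodesic_iff {u v w : V} (p : G.Walk u v) (hp : IsGeodesic G p)
    (h : G.Adj w u) :
    IsGeodesic G (SimpleGraph.Walk.cons h p) ↔ G.dist w v = G.dist u v + 1 := by
  classical
  constructor
  · rintro ⟨-, hl⟩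
    rw [SimpleGraph.Walk.length_cons, hp.2] at hl
    omega
  · intro hd
    have hlen := hp.2
    have hns : w ∉ p.support := by
      intro hw
      have h1 : G.dist w v ≤ (p.dropUntil w hw).length := SimpleGraph.dist_le _
      have h2 : (p.dropUntil w hw).length ≤ p.length :=
        SimpleGraph.Walk.length_dropUntil_le p hw
      omega
    refine ⟨(SimpleGraph.Walk.cons_isPath_iff h p).mpr ⟨hp.1, hns⟩, ?_⟩
    rw [SimpleGraph.Walk.length_cons, hlen, hd]

lemma concat_geodesic_iff {u v w : V} (p : G.Walk u v) (hp : IsGeodesic G p)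
    (h : G.Adj v w) :
    IsGeodesic G (p.concat h) ↔ G.dist u w = G.dist u v + 1 := by
  have hrev : IsGeodesic G (p.concat h) ↔ IsGeodesic G (p.concat h).reverse := by
    constructor
    · exact isGeodesic_reverse
    · intro hq
      have := isGeodesic_reverse hq
      rwa [SimpleGraph.Walk.reverse_reverse] at this
  rw [hrev, SimpleGraph.Walk.reverse_concat,
    cons_geodesic_iff p.reverse (isGeodesic_reverse hp) h.symm,
    show G.dist w u = G.dist u w from SimpleGraph.dist_comm,
    show G.dist v u = G.dist u v from SimpleGraph.dist_comm]

/-- The condition on a pair of endpoints that makes geodesics between them maximal. -/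
def MP {V : Type*} (G : SimpleGraph V) (u v : V) : Prop :=
  (∀ w, G.Adj w u → G.dist w v ≠ G.dist u v + 1) ∧
  (∀ w, G.Adj v w → G.dist u w ≠ G.dist u v + 1)

lemma isMaxGeodesic_iff {u v : V} (p : G.Walk u v) :
    IsMaxGeodesic G p ↔ IsGeodesic G p ∧ MP G u v := by
  constructor
  · rintro ⟨hg, h1, h2⟩
    exact ⟨hg, fun w hw hd => h1 w hw ((cons_geodesic_iff p hg hw).mpr hd),
      fun w hw hd => h2 w hw ((concat_geodesic_iff p hg hw).mpr hd)⟩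
  · rintro ⟨hg, h1, h2⟩
    exact ⟨hg, fun w hw hc => h1 w hw ((cons_geodesic_iff p hg hw).mp hc),
      fun w hw hc => h2 w hw ((concat_geodesic_iff p hg hw).mp hc)⟩

lemma MP.dist_eq_diam (hU : UniformGeodesic G) {u v : V} (hMP : MP G u v) :
    G.dist u v = G.diam ∧ G.ediam ≠ ⊤ := by
  obtain ⟨p, hpath, hlen⟩ := hU.1.exists_path_of_dist u v
  have hmax : IsMaxGeodesic G p := (isMaxGeodesic_iff p).mpr ⟨⟨hpath, hlen⟩, hMP⟩
  have hdiam := hU.2 u v p hmax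
  refine ⟨by rw [← hlen, hdiam], ?_⟩
  intro htop
  have hd0 : G.diam = 0 := by simp [SimpleGraph.diam, htop]
  have huv : u = v := by
    have : G.dist u v = 0 := by rw [← hlen, hdiam, hd0]
    exact (hU.1.dist_eq_zero_iff).mp this
  subst huv
  have hn : ∀ w, ¬ G.Adj w u := by
    intro w hw
    exact hMP.1 w hw (by
      rw [SimpleGraph.dist_self]
      simpa using SimpleGraph.dist_eq_one_iff_adj.mpr hw)
  have key : ∀ x y, (q : G.Walk x y) → y = u → x = u := by
    intro x y q
    induction q with
    | nil => exact id
    | @cons a b c hadj q ih =>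
      intro hy
      exact absurd (show G.Adj a u from ih hy ▸ hadj) (hn a)
  haveI : Subsingleton V := by
    constructor
    intro a b
    have ha : a = u := (hU.1.preconnected a u).elim fun q => key a u q rfl
    have hb : b = u := (hU.1.preconnected b u).elim fun q => key b u q rfl
    rw [ha, hb]
  rw [SimpleGraph.ediam_eq_zero_of_subsingleton] at htop
  exact (ENat.top_ne_zero htop.symm)

end Aux

/-! ### Lemmas about the Cartesian product -/

section Prod

open Finset

variable {r : ℕ} {W : Fin r → Type*} (G : ∀ i, SimpleGraph (W i))

lemma exists_lift_walk (i : Fin r) : ∀ {a b : W i} (w : (G i).Walk a b)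
    (x : ∀ j, W j), x i = a →
    ∃ q : (cartProdIndexed G).Walk x (Function.update x i b), q.length = w.length := by
  intro a b w
  induction w with
  | nil =>
    intro x hx
    subst hx
    exact ⟨SimpleGraph.Walk.nil.copy rfl (Function.update_eq_self i x).symm, by simp⟩
  | @cons a c b hadj w ih =>
    intro x hx
    have hA : (cartProdIndexed G).Adj x (Function.update x i c) := by
      refine ⟨i, ?_, fun j hj => (Function.update_of_ne hj c x).symm⟩
      rw [Function.update_self, hx]
      exact hadj
    obtain ⟨q, hq⟩ := ih (Function.update x i c) (Function.update_self i c x)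
    refine ⟨(SimpleGraph.Walk.cons hA q).copy rfl ?_, ?_⟩
    · rw [Function.update_idem]
    · simp [hq]

lemma exists_walk_sum (hc : ∀ i, (G i).Connected) :
    ∀ (s : Finset (Fin r)) (x y : ∀ j, W j), (∀ j, j ∉ s → x j = y j) →
    ∃ q : (cartProdIndexed G).Walk x y,
      q.length = ∑ i ∈ s, (G i).dist (x i) (y i) := by
  intro s
  induction s using Finset.induction_on with
  | empty =>
    intro x y hxy
    have hEq : x = y := funext fun j => hxy j (Finset.notMem_empty j)
    subst hEq
    exact ⟨SimpleGraph.Walk.nil, by simp⟩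
  | @insert i s hi ih =>
    intro x y hxy
    obtain ⟨w, hw⟩ := (hc i).exists_walk_length_eq_dist (x i) (y i)
    obtain ⟨q1, hq1⟩ := exists_lift_walk G i w x rfl
    have hside : ∀ j, j ∉ s → Function.update x i (y i) j = y j := by
      intro j hj
      by_cases hji : j = i
      · subst hji
        exact Function.update_self j (y j) x
      · rw [Function.update_of_ne hji (y i) x]
        exact hxy j (by simp [Finset.mem_insert, hji, hj])
    obtain ⟨q2, hq2⟩ := ih (Function.update x i (y i)) y hside
    refine ⟨q1.append q2, ?_⟩
    rw [SimpleGraph.Walk.length_append, hq1, hq2, hw, Finset.sum_insert hi]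
    congr 1
    refine Finset.sum_congr rfl fun j hj => ?_
    rw [Function.update_of_ne (ne_of_mem_of_not_mem hj hi) (y i) x]

lemma sum_le_length (hc : ∀ i, (G i).Connected) :
    ∀ {x y : ∀ j, W j} (q : (cartProdIndexed G).Walk x y),
    ∑ i, (G i).dist (x i) (y i) ≤ q.length := by
  intro x y q
  induction q with
  | nil => simp [SimpleGraph.dist_self]
  | @cons x z y hadj q ih =>
    obtain ⟨i0, hA, ho⟩ := hadj
    change _ ≤ q.length + 1
    have key : ∑ i, (G i).dist (x i) (y i) ≤ (∑ i, (G i).dist (z i) (y i)) + 1 := by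
      rw [← Finset.add_sum_erase _ (fun i => (G i).dist (x i) (y i)) (Finset.mem_univ i0),
          ← Finset.add_sum_erase _ (fun i => (G i).dist (z i) (y i)) (Finset.mem_univ i0)]
      have h1 : (G i0).dist (x i0) (y i0) ≤ (G i0).dist (z i0) (y i0) + 1 := by
        have ht := (hc i0).dist_triangle (u := x i0) (v := z i0) (w := y i0)
        have h2 : (G i0).dist (x i0) (z i0) = 1 := SimpleGraph.dist_eq_one_iff_adj.mpr hA
        omega
      have h3 : ∑ j ∈ Finset.univ.erase i0, (G j).dist (x j) (y j)
          = ∑ j ∈ Finset.univ.erase i0, (G j).dist (z j) (y j) :=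
        Finset.sum_congr rfl fun j hj => by rw [ho j (Finset.ne_of_mem_erase hj)]
      omega
    omega

lemma prod_dist (hc : ∀ i, (G i).Connected) (x y : ∀ j, W j) :
    (cartProdIndexed G).dist x y = ∑ i, (G i).dist (x i) (y i) := by
  obtain ⟨q, hq⟩ := exists_walk_sum G hc Finset.univ x y (by simp)
  refine le_antisymm (hq ▸ SimpleGraph.dist_le q) ?_
  obtain ⟨q', hq'⟩ := q.reachable.exists_walk_length_eq_dist
  calc ∑ i, (G i).dist (x i) (y i) ≤ q'.length := sum_le_length G hc q'
    _ = (cartProdIndexed G).dist x y := hq'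

lemma prod_connected (hc : ∀ i, (G i).Connected) : (cartProdIndexed G).Connected := by
  haveI : ∀ i, Nonempty (W i) := fun i => (hc i).nonempty
  haveI : Nonempty (∀ i, W i) := ⟨fun i => Classical.arbitrary _⟩
  constructor
  intro x y
  obtain ⟨q, -⟩ := exists_walk_sum G hc Finset.univ x y (by simp)
  exact q.reachable

lemma MP_proj (hc : ∀ i, (G i).Connected) {x y : ∀ j, W j}
    (hMP : MP (cartProdIndexed G) x y) (i : Fin r) : MP (G i) (x i) (y i) := by
  constructor
  · intro w hw hd
    have hA : (cartProdIndexed G).Adj (Function.update x i w) x := by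
      refine ⟨i, ?_, fun j hj => Function.update_of_ne hj w x⟩
      rw [Function.update_self]
      exact hw
    apply hMP.1 (Function.update x i w) hA
    rw [prod_dist G hc, prod_dist G hc,
      ← Finset.add_sum_erase _ (fun j => (G j).dist (Function.update x i w j) (y j))
        (Finset.mem_univ i),
      ← Finset.add_sum_erase _ (fun j => (G j).dist (x j) (y j)) (Finset.mem_univ i)]
    have e1 : ∑ j ∈ Finset.univ.erase i, (G j).dist (Function.update x i w j) (y j)
        = ∑ j ∈ Finset.univ.erase i, (G j).dist (x j) (y j) :=
      Finset.sum_congr rfl fun j hj => by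
        rw [Function.update_of_ne (Finset.ne_of_mem_erase hj) w x]
    have e2 : (G i).dist (Function.update x i w i) (y i) = (G i).dist (x i) (y i) + 1 := by
      rw [Function.update_self]
      exact hd
    omega
  · intro w hw hd
    have hA : (cartProdIndexed G).Adj y (Function.update y i w) := by
      refine ⟨i, ?_, fun j hj => (Function.update_of_ne hj w y).symm⟩
      rw [Function.update_self]
      exact hw
    apply hMP.2 (Function.update y i w) hA
    rw [prod_dist G hc, prod_dist G hc,
      ← Finset.add_sum_erase _ (fun j => (G j).dist (x j) (Function.update y i w j))
        (Finset.mem_univ i),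
      ← Finset.add_sum_erase _ (fun j => (G j).dist (x j) (y j)) (Finset.mem_univ i)]
    have e1 : ∑ j ∈ Finset.univ.erase i, (G j).dist (x j) (Function.update y i w j)
        = ∑ j ∈ Finset.univ.erase i, (G j).dist (x j) (y j) :=
      Finset.sum_congr rfl fun j hj => by
        rw [Function.update_of_ne (Finset.ne_of_mem_erase hj) w y]
    have e2 : (G i).dist (x i) (Function.update y i w i) = (G i).dist (x i) (y i) + 1 := by
      rw [Function.update_self]
      exact hd
    omega

end Prod

theorem cartProd_uniformGeodesic (r : ℕ) (hr : 1 ≤ r) {W : Fin r → Type*}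
    (G : ∀ i, SimpleGraph (W i)) (h : ∀ i, UniformGeodesic (G i)) :
    UniformGeodesic (cartProdIndexed G) := by
  have hc : ∀ i, (G i).Connected := fun i => (h i).1
  have hconnP := prod_connected G hc
  refine ⟨hconnP, ?_⟩
  intro x y p hp
  obtain ⟨hgeo, hMP⟩ := (isMaxGeodesic_iff p).mp hp
  have hkey : ∀ i, (G i).dist (x i) (y i) = (G i).diam ∧ (G i).ediam ≠ ⊤ :=
    fun i => MP.dist_eq_diam (h i) (MP_proj G hc hMP i)
  have hdist : (cartProdIndexed G).dist x y = ∑ i, (G i).diam := by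
    rw [prod_dist G hc]
    exact Finset.sum_congr rfl fun i _ => (hkey i).1
  have hediam : (cartProdIndexed G).ediam = ((∑ i, (G i).diam : ℕ) : ℕ∞) := by
    apply le_antisymm
    · rw [SimpleGraph.ediam_le_iff]
      intro a b
      have hre : (cartProdIndexed G).edist a b
          = (((cartProdIndexed G).dist a b : ℕ) : ℕ∞) := by
        rw [SimpleGraph.dist]
        exact (ENat.coe_toNat
          (SimpleGraph.edist_ne_top_iff_reachable.mpr (hconnP.preconnected a b))).symm
      rw [hre]
      rw [Nat.cast_le]
      rw [prod_dist G hc]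
      exact Finset.sum_le_sum fun i _ => SimpleGraph.dist_le_diam (hkey i).2
    · have hre : (cartProdIndexed G).edist x y
          = (((cartProdIndexed G).dist x y : ℕ) : ℕ∞) := by
        rw [SimpleGraph.dist]
        exact (ENat.coe_toNat
          (SimpleGraph.edist_ne_top_iff_reachable.mpr (hconnP.preconnected x y))).symm
      calc ((∑ i, (G i).diam : ℕ) : ℕ∞) = (cartProdIndexed G).edist x y := by
            rw [hre, hdist]
        _ ≤ (cartProdIndexed G).ediam := SimpleGraph.edist_le_ediam
  have hdiamP : (cartProdIndexed G).diam = ∑ i, (G i).diam := by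
    rw [SimpleGraph.diam, hediam, ENat.toNat_coe]
  rw [hdiamP, ← hdist]
  exact hgeo.2
end

section
/- If G₁, …, G_r (r ≥ 1) are uniform geodesic graphs, then gpack(G₁ □ ⋯ □ G_r) ≤ ⌊ n(G₁)⋯n(G_r) / (diam(G₁) + ⋯ + diam(G_r) + 1) ⌋. -/
open SimpleGraph

section Aux

variable {r : ℕ} {W : Fin r → Type*} (G : ∀ i, SimpleGraph (W i))

/-- Lift a walk in one factor to a walk in the product, other coordinates fixed. -/
def liftWalk (x : ∀ i, W i) (i : Fin r) :
    ∀ {a b : W i}, (G i).Walk a b →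
      (cartProdIndexed G).Walk (Function.update x i a) (Function.update x i b)
  | _, _, SimpleGraph.Walk.nil => SimpleGraph.Walk.nil
  | _, _, SimpleGraph.Walk.cons hadj q =>
      SimpleGraph.Walk.cons
        ⟨i, by simpa using hadj, fun j hj => by
          simp [Function.update_of_ne hj]⟩
        (liftWalk x i q)

lemma liftWalk_length (x : ∀ i, W i) (i : Fin r) {a b : W i} (q : (G i).Walk a b) :
    (liftWalk G x i q).length = q.length := by
  induction q with
  | nil => rfl
  | cons hadj q ih => exact congrArg (· + 1) ih

lemma exists_walk_prod (hconn : ∀ i, (G i).Connected) (u v : ∀ i, W i) :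
    ∃ p : (cartProdIndexed G).Walk u v, p.length ≤ ∑ i, (G i).dist (u i) (v i) := by
  classical
  have key : ∀ s : Finset (Fin r),
      ∃ p : (cartProdIndexed G).Walk u (fun i => if i ∈ s then v i else u i),
        p.length ≤ ∑ i ∈ s, (G i).dist (u i) (v i) := by
    intro s
    induction s using Finset.induction with
    | empty =>
      exact ⟨SimpleGraph.Walk.nil.copy rfl (by funext i; simp), by simp⟩
    | @insert j s hj ih =>
      set mid : ∀ i, W i := fun i => if i ∈ s then v i else u i with hmid
      obtain ⟨p, hp⟩ := ih
      obtain ⟨q, hq⟩ := (hconn j).exists_walk_length_eq_dist (u j) (v j)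
      have h1 : Function.update mid j (u j) = mid := by
        funext i
        rcases eq_or_ne i j with rfl | hij
        · simp [hmid, hj]
        · simp [Function.update_of_ne hij]
      have h2 : Function.update mid j (v j) =
          fun i => if i ∈ insert j s then v i else u i := by
        funext i
        rcases eq_or_ne i j with rfl | hij
        · simp
        · simp [Function.update_of_ne hij, hij, hmid]
      refine ⟨p.append (((liftWalk G mid j q).copy h1 h2)), ?_⟩
      rw [SimpleGraph.Walk.length_append, SimpleGraph.Walk.length_copy,
        liftWalk_length, Finset.sum_insert hj, hq]
      omega
  obtain ⟨p, hp⟩ := key Finset.univ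
  exact ⟨p.copy rfl (by funext i; simp), by simpa using hp⟩

lemma sum_dist_le_length (hconn : ∀ i, (G i).Connected) {u v : ∀ i, W i}
    (p : (cartProdIndexed G).Walk u v) :
    ∑ i, (G i).dist (u i) (v i) ≤ p.length := by
  classical
  induction p with
  | nil => simp
  | @cons u x v hadj q ih =>
    obtain ⟨i0, h0, heq⟩ := id hadj
    have hd : ∀ i, (G i).dist (u i) (v i) ≤
        (if i = i0 then 1 else 0) + (G i).dist (x i) (v i) := by
      intro i
      rcases eq_or_ne i i0 with rfl | hii
      · have h1 : (G i).dist (u i) (x i) ≤ 1 :=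
          SimpleGraph.dist_le (SimpleGraph.Walk.cons h0 SimpleGraph.Walk.nil)
        have h2 := (hconn i).dist_triangle (u := u i) (v := x i) (w := v i)
        simpa using h2.trans (by omega)
      · rw [heq i hii]; simp
    calc ∑ i, (G i).dist (u i) (v i)
        ≤ ∑ i, ((if i = i0 then 1 else 0) + (G i).dist (x i) (v i)) :=
          Finset.sum_le_sum fun i _ => hd i
      _ = 1 + ∑ i, (G i).dist (x i) (v i) := by
          rw [Finset.sum_add_distrib, Finset.sum_ite_eq' Finset.univ i0 (fun _ => 1)]
          simp
      _ ≤ 1 + q.length := by omega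
      _ = (SimpleGraph.Walk.cons hadj q).length := by
          simp [SimpleGraph.Walk.length_cons, Nat.add_comm]

lemma dist_prod (hconn : ∀ i, (G i).Connected) (u v : ∀ i, W i) :
    (cartProdIndexed G).dist u v = ∑ i, (G i).dist (u i) (v i) := by
  obtain ⟨p, hp⟩ := exists_walk_prod G hconn u v
  have hreach : (cartProdIndexed G).Reachable u v := ⟨p⟩
  obtain ⟨q, hq⟩ := hreach.exists_walk_length_eq_dist
  exact le_antisymm ((SimpleGraph.dist_le p).trans hp)
    (hq ▸ sum_dist_le_length G hconn q)

end Aux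
section Key

variable {r : ℕ} {W : Fin r → Type*} (G : ∀ i, SimpleGraph (W i))

lemma maxGeodesic_length (h : ∀ i, UniformGeodesic (G i)) {u v : ∀ i, W i}
    (p : (cartProdIndexed G).Walk u v) (hp : IsMaxGeodesic (cartProdIndexed G) p) :
    p.length = ∑ i, (G i).diam := by
  classical
  have hconn : ∀ i, (G i).Connected := fun i => (h i).1
  have hdist : ∀ i, (G i).dist (u i) (v i) = (G i).diam := by
    intro i
    obtain ⟨q, hq⟩ := (hconn i).exists_walk_length_eq_dist (u i) (v i)
    have hqmax : IsMaxGeodesic (G i) q := by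
      refine ⟨⟨q.isPath_of_length_eq_dist hq, hq⟩, ?_, ?_⟩
      · -- cannot extend at the start
        intro a ha hgeo
        have hlen : (G i).dist a (v i) = (G i).dist (u i) (v i) + 1 := by
          have := hgeo.2
          simp only [SimpleGraph.Walk.length_cons] at this
          omega
        set w : ∀ j, W j := Function.update u i a with hw
        have hadj : (cartProdIndexed G).Adj w u :=
          ⟨i, by simpa [hw] using ha,
            fun j hj => by simp [hw, Function.update_of_ne hj]⟩
        have hdw : (cartProdIndexed G).dist w v =
            (cartProdIndexed G).dist u v + 1 := by
          rw [dist_prod G hconn, dist_prod G hconn]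
          rw [← Finset.sum_erase_add _ _ (Finset.mem_univ i),
            ← Finset.sum_erase_add _ (fun j => (G j).dist (u j) (v j)) (Finset.mem_univ i)]
          have hs : ∑ j ∈ Finset.univ.erase i, (G j).dist (w j) (v j)
              = ∑ j ∈ Finset.univ.erase i, (G j).dist (u j) (v j) :=
            Finset.sum_congr rfl fun j hj => by
              rw [hw, Function.update_of_ne (Finset.ne_of_mem_erase hj)]
          have hi : (G i).dist (w i) (v i) = (G i).dist (u i) (v i) + 1 := by
            rw [hw]; simpa using hlen
          omega
        refine hp.2.1 w hadj ⟨?_, ?_⟩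
        · apply SimpleGraph.Walk.isPath_of_length_eq_dist
          simp [SimpleGraph.Walk.length_cons, hdw, hp.1.2]
        · simp [SimpleGraph.Walk.length_cons, hdw, hp.1.2]
      · -- cannot extend at the end
        intro b hb hgeo
        have hlen : (G i).dist (u i) b = (G i).dist (u i) (v i) + 1 := by
          have := hgeo.2
          rw [SimpleGraph.Walk.length_concat] at this
          omega
        set w : ∀ j, W j := Function.update v i b with hw
        have hadj : (cartProdIndexed G).Adj v w :=
          ⟨i, by simpa [hw] using hb,
            fun j hj => by simp [hw, Function.update_of_ne hj]⟩
        have hdw : (cartProdIndexed G).dist u w =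
            (cartProdIndexed G).dist u v + 1 := by
          rw [dist_prod G hconn, dist_prod G hconn]
          rw [← Finset.sum_erase_add _ _ (Finset.mem_univ i),
            ← Finset.sum_erase_add _ (fun j => (G j).dist (u j) (v j)) (Finset.mem_univ i)]
          have hs : ∑ j ∈ Finset.univ.erase i, (G j).dist (u j) (w j)
              = ∑ j ∈ Finset.univ.erase i, (G j).dist (u j) (v j) :=
            Finset.sum_congr rfl fun j hj => by
              rw [hw, Function.update_of_ne (Finset.ne_of_mem_erase hj)]
          have hi : (G i).dist (u i) (w i) = (G i).dist (u i) (v i) + 1 := by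
            rw [hw]; simpa using hlen
          omega
        refine hp.2.2 w hadj ⟨?_, ?_⟩
        · apply SimpleGraph.Walk.isPath_of_length_eq_dist
          simp [SimpleGraph.Walk.length_concat, hdw, hp.1.2]
        · simp [SimpleGraph.Walk.length_concat, hdw, hp.1.2]
    rw [← hq, (h i).2 _ _ q hqmax]
  rw [hp.1.2, dist_prod G hconn]
  exact Finset.sum_congr rfl fun i _ => hdist i

end Key
theorem gpack_cartProd_le (r : ℕ) (hr : 1 ≤ r) {W : Fin r → Type*}
    [∀ i, Fintype (W i)] (G : ∀ i, SimpleGraph (W i))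
    (h : ∀ i, UniformGeodesic (G i)) :
    gpackNum (cartProdIndexed G) ≤
      (∏ i, Fintype.card (W i)) / ((∑ i, (G i).diam) + 1) := by
  classical
  refine csSup_le ⟨0, ∅, ?_, rfl⟩ ?_
  · exact ⟨fun s hs => absurd hs (by simp), by simp⟩
  rintro k ⟨P, ⟨hPmax, hPdisj⟩, rfl⟩
  have hcard : ∀ s ∈ P, (Set.toFinite s).toFinset.card = (∑ i, (G i).diam) + 1 := by
    intro s hs
    obtain ⟨u, v, p, hmax, rfl⟩ := hPmax s hs
    have hlen := maxGeodesic_length G h p hmax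
    have he : (Set.toFinite {x | x ∈ p.support}).toFinset = p.support.toFinset := by
      apply Finset.coe_injective; simp
    rw [he, List.toFinset_card_of_nodup hmax.1.1.support_nodup,
      SimpleGraph.Walk.length_support, hlen]
  have hdisj : ∀ s ∈ P, ∀ t ∈ P, s ≠ t →
      Disjoint (Set.toFinite s).toFinset (Set.toFinite t).toFinset := by
    intro s hs t ht hst
    exact Set.Finite.disjoint_toFinset.mpr (hPdisj hs ht hst)
  have hsum : ∑ s ∈ P, (Set.toFinite s).toFinset.card ≤ Fintype.card (∀ i, W i) := by
    rw [← Finset.card_biUnion hdisj]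
    exact Finset.card_le_univ _
  rw [Finset.sum_congr rfl hcard, Finset.sum_const, smul_eq_mul, Fintype.card_pi] at hsum
  exact (Nat.le_div_iff_mul_le (by omega)).mpr hsum
end

section
/- If T is a tree, then gpack(T) = gpack(SM(T)), where SM(T) is obtained from T by smoothing all vertices of degree 2. -/
open SimpleGraph

/-- Smoothing the vertex `u` (assumed of degree 2): delete `u` and join its two
neighbors. -/
def SmoothVertexAt {V : Type} (G : SimpleGraph V) (u : V) : SimpleGraph {v : V // v ≠ u} where
  Adj a b := G.Adj ↑a ↑b ∨ (a ≠ b ∧ G.Adj ↑a u ∧ G.Adj u ↑b)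
  symm := by
    constructor
    rintro a b (h | ⟨hne, h1, h2⟩)
    · exact Or.inl h.symm
    · exact Or.inr ⟨hne.symm, h2.symm, h1.symm⟩
  loopless := by
    constructor
    rintro a (h | ⟨hne, h1, h2⟩)
    · exact G.irrefl h
    · exact hne rfl

/-- A graph bundled with its vertex type. -/
structure GraphOn : Type 1 where
  V : Type
  G : SimpleGraph V

/-- One smoothing step: `B` is (isomorphic to) the graph obtained from `A` by
smoothing one vertex of degree 2. -/
def SmoothStep (A B : GraphOn) : Prop :=
  ∃ (u x y : A.V), x ≠ y ∧ A.G.neighborSet u = {x, y} ∧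
    Nonempty (B.G ≃g SmoothVertexAt A.G u)

/- ### Auxiliary lemmas -/

namespace GpackAux

open SimpleGraph.Walk

variable {V : Type*} [DecidableEq V] {G : SimpleGraph V}

/-- A walk is determined by its support list. -/
lemma walk_eq_of_support_eq : ∀ {a b : V} (p q : G.Walk a b),
    p.support = q.support → p = q := by
  intro a b p
  induction p with
  | nil =>
    intro q h
    cases q with
    | nil => rfl
    | cons h' q' => simp [support_cons] at h
  | @cons a c b h p ih =>
    intro q hq
    cases q with
    | nil => simp [support_cons] at hq
    | @cons _ c' _ h' q' =>
      rw [support_cons, support_cons, List.cons.injEq] at hq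
      have hsup : p.support = q'.support := hq.2
      have hcc : c = c' := by
        have h1 := congrArg List.head? hsup
        rwa [support_eq_cons p, support_eq_cons q', List.head?_cons, List.head?_cons,
          Option.some.injEq] at h1
      subst hcc
      rw [ih q' hsup]

/-- In a tree, a walk is a geodesic iff it is a path. -/
lemma isGeodesic_iff_isPath (hc : G.Connected) (hG : G.IsAcyclic) {a b : V}
    (p : G.Walk a b) : IsGeodesic G p ↔ p.IsPath := by
  constructor
  · exact fun h => h.1
  · intro hp
    refine ⟨hp, le_antisymm ?_ (SimpleGraph.dist_le p)⟩
    obtain ⟨q, hq⟩ := hc.exists_walk_length_eq_dist a b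
    have hb : q.bypass.IsPath := q.bypass_isPath
    have hpq : p = q.bypass := congrArg Subtype.val (hG.path_unique ⟨p, hp⟩ ⟨q.bypass, hb⟩)
    calc p.length = q.bypass.length := by rw [hpq]
      _ ≤ q.length := q.length_bypass_le
      _ = G.dist a b := hq

lemma concat_isPath_iff' {a b w : V} (p : G.Walk a b) (h : G.Adj b w) :
    (p.concat h).IsPath ↔ p.IsPath ∧ w ∉ p.support := by
  rw [← isPath_reverse_iff, reverse_concat, cons_isPath_iff, isPath_reverse_iff,
    support_reverse, List.mem_reverse]

/-- In a tree, the maximal-geodesic vertex sets are exactly vertex sets of paths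
all of whose endpoint-neighbours lie on the path. -/
lemma isMaxGeodesicSet_iff (hc : G.Connected) (hG : G.IsAcyclic) (s : Set V) :
    IsMaxGeodesicSet G s ↔ ∃ (a b : V) (p : G.Walk a b), p.IsPath ∧
      (∀ w, G.Adj w a → w ∈ p.support) ∧ (∀ w, G.Adj b w → w ∈ p.support) ∧
      s = {z | z ∈ p.support} := by
  constructor
  · rintro ⟨a, b, p, ⟨hgeo, hcons, hconc⟩, rfl⟩
    have hp := hgeo.1
    refine ⟨a, b, p, hp, ?_, ?_, rfl⟩
    · intro w hw
      by_contra hmem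
      exact hcons w hw ((isGeodesic_iff_isPath hc hG _).2 ((cons_isPath_iff hw p).2 ⟨hp, hmem⟩))
    · intro w hw
      by_contra hmem
      exact hconc w hw ((isGeodesic_iff_isPath hc hG _).2 ((concat_isPath_iff' p hw).2 ⟨hp, hmem⟩))
  · rintro ⟨a, b, p, hp, hA, hB, rfl⟩
    refine ⟨a, b, p, ⟨(isGeodesic_iff_isPath hc hG p).2 hp, ?_, ?_⟩, rfl⟩
    · intro w hw hgeo
      have h1 := (isGeodesic_iff_isPath hc hG _).1 hgeo
      rw [cons_isPath_iff] at h1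
      exact h1.2 (hA w hw)
    · intro w hw hgeo
      have h1 := (isGeodesic_iff_isPath hc hG _).1 hgeo
      rw [concat_isPath_iff'] at h1
      exact h1.2 (hB w hw)

/-- Generic transfer principle for packings. -/
lemma packing_set_subset {V W : Type*} {G : SimpleGraph V} {H : SimpleGraph W}
    (F : Set V → Set W)
    (h1 : ∀ s, IsMaxGeodesicSet G s → IsMaxGeodesicSet H (F s))
    (h2 : ∀ s t, IsMaxGeodesicSet G s → IsMaxGeodesicSet G t → F s = F t → s = t)
    (h3 : ∀ s t, IsMaxGeodesicSet G s → IsMaxGeodesicSet G t → Disjoint s t →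
      Disjoint (F s) (F t)) :
    {k | ∃ P : Finset (Set V), IsGeodesicPacking G ↑P ∧ P.card = k} ⊆
      {k | ∃ P : Finset (Set W), IsGeodesicPacking H ↑P ∧ P.card = k} := by
  classical
  rintro k ⟨P, ⟨hmax, hdisj⟩, rfl⟩
  refine ⟨P.image F, ⟨?_, ?_⟩, ?_⟩
  · intro t ht
    rw [Finset.coe_image] at ht
    obtain ⟨s, hs, rfl⟩ := ht
    exact h1 s (hmax s hs)
  · rw [Finset.coe_image]
    rintro t1 ⟨s1, hs1, rfl⟩ t2 ⟨s2, hs2, rfl⟩ hne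
    have hne' : s1 ≠ s2 := fun h => hne (by rw [h])
    exact h3 s1 s2 (hmax s1 hs1) (hmax s2 hs2) (hdisj hs1 hs2 hne')
  · exact Finset.card_image_of_injOn fun s1 hs1 s2 hs2 h =>
      h2 s1 s2 (hmax s1 (by exact_mod_cast hs1)) (hmax s2 (by exact_mod_cast hs2)) h

lemma gpack_eq_of_transfer {V W : Type*} {G : SimpleGraph V} {H : SimpleGraph W}
    (F : Set V → Set W) (E : Set W → Set V)
    (h1 : ∀ s, IsMaxGeodesicSet G s → IsMaxGeodesicSet H (F s))
    (h2 : ∀ s t, IsMaxGeodesicSet G s → IsMaxGeodesicSet G t → F s = F t → s = t)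
    (h3 : ∀ s t, IsMaxGeodesicSet G s → IsMaxGeodesicSet G t → Disjoint s t →
      Disjoint (F s) (F t))
    (h1' : ∀ s, IsMaxGeodesicSet H s → IsMaxGeodesicSet G (E s))
    (h2' : ∀ s t, IsMaxGeodesicSet H s → IsMaxGeodesicSet H t → E s = E t → s = t)
    (h3' : ∀ s t, IsMaxGeodesicSet H s → IsMaxGeodesicSet H t → Disjoint s t →
      Disjoint (E s) (E t)) :
    gpackNum G = gpackNum H := by
  unfold gpackNum
  congr 1
  exact Set.Subset.antisymm (packing_set_subset F h1 h2 h3) (packing_set_subset E h1' h2' h3')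

/- ### Transfer along an isomorphism (between trees) -/

lemma iso_acyclic {V W : Type*} {G : SimpleGraph V} {H : SimpleGraph W}
    (e : G ≃g H) (hG : G.IsAcyclic) : H.IsAcyclic := by
  intro v c hcyc
  exact hG (c.map e.symm.toHom) (hcyc.map e.symm.toEquiv.injective)

lemma iso_maxset {V W : Type*} [DecidableEq V] [DecidableEq W]
    {G : SimpleGraph V} {H : SimpleGraph W}
    (e : G ≃g H) (hcG : G.Connected) (haG : G.IsAcyclic)
    (s : Set V) (hs : IsMaxGeodesicSet G s) : IsMaxGeodesicSet H (⇑e '' s) := by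
  have hcH : H.Connected := e.connected_iff.1 hcG
  have haH : H.IsAcyclic := iso_acyclic e haG
  rw [isMaxGeodesicSet_iff hcG haG] at hs
  rw [isMaxGeodesicSet_iff hcH haH]
  obtain ⟨a, b, p, hp, hA, hB, rfl⟩ := hs
  have hinj : Function.Injective ⇑e.toHom := e.toEquiv.injective
  refine ⟨e a, e b, p.map e.toHom, map_isPath_of_injective hinj hp, ?_, ?_, ?_⟩
  · intro w hw
    have hadj : G.Adj (e.symm w) a := by
      have h1 : H.Adj (e (e.symm w)) (e a) := by rwa [e.apply_symm_apply]
      exact e.map_adj_iff.1 h1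
    have hm := hA _ hadj
    rw [Walk.support_map]
    exact List.mem_map.2 ⟨e.symm w, hm, by simp⟩
  · intro w hw
    have hadj : G.Adj b (e.symm w) := by
      have h1 : H.Adj (e b) (e (e.symm w)) := by rwa [e.apply_symm_apply]
      exact e.map_adj_iff.1 h1
    have hm := hB _ hadj
    rw [Walk.support_map]
    exact List.mem_map.2 ⟨e.symm w, hm, by simp⟩
  · ext z
    simp only [Set.mem_image, Set.mem_setOf_eq, Walk.support_map, List.mem_map]
    rfl

lemma iso_gpack {V W : Type*} [DecidableEq V] [DecidableEq W]
    {G : SimpleGraph V} {H : SimpleGraph W}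
    (e : G ≃g H) (hcG : G.Connected) (haG : G.IsAcyclic) :
    gpackNum G = gpackNum H := by
  have hcH : H.Connected := e.connected_iff.1 hcG
  have haH : H.IsAcyclic := iso_acyclic e haG
  exact gpack_eq_of_transfer (Set.image ⇑e) (Set.image ⇑e.symm)
    (fun s hs => iso_maxset e hcG haG s hs)
    (fun s t _ _ h => Set.image_injective.2 e.toEquiv.injective h)
    (fun s t _ _ hd => (Set.disjoint_image_iff e.toEquiv.injective).2 hd)
    (fun s hs => iso_maxset e.symm hcH haH s hs)
    (fun s t _ _ h => Set.image_injective.2 e.symm.toEquiv.injective h)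
    (fun s t _ _ hd => (Set.disjoint_image_iff e.symm.toEquiv.injective).2 hd)

/- ### The smoothing step -/

section Smooth

variable {V : Type} [DecidableEq V] {G : SimpleGraph V} {u x y : V}

lemma adj_u_iff (hN : G.neighborSet u = {x, y}) {w : V} :
    G.Adj u w ↔ w = x ∨ w = y := by
  have := Set.ext_iff.1 hN w
  simpa [mem_neighborSet] using this

lemma second_vertex (hG : G.IsAcyclic) {a b w : V} (p : G.Walk a b) (hp : p.IsPath)
    (hadj : G.Adj a w) (hw : w ∈ p.support) : ∃ l, p.support = a :: w :: l := by
  have htp : (p.takeUntil w hw).IsPath := hp.takeUntil hw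
  have h2 : (Walk.cons hadj Walk.nil : G.Walk a w).IsPath := by simp [hadj.ne]
  have heq : p.takeUntil w hw = Walk.cons hadj Walk.nil :=
    congrArg Subtype.val (hG.path_unique ⟨_, htp⟩ ⟨_, h2⟩)
  refine ⟨(p.dropUntil w hw).support.tail, ?_⟩
  conv_lhs => rw [← p.take_spec hw]
  rw [support_append, heq]
  simp [support_cons]

lemma endpoint_ne (hG : G.IsAcyclic) (hxy : x ≠ y) (hN : G.neighborSet u = {x, y})
    {a b : V} (p : G.Walk a b) (hp : p.IsPath)
    (hA : ∀ w, G.Adj w a → w ∈ p.support) : a ≠ u := by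
  intro hau
  have hux : G.Adj u x := (adj_u_iff hN).2 (Or.inl rfl)
  have huy : G.Adj u y := (adj_u_iff hN).2 (Or.inr rfl)
  have hax : G.Adj a x := by rw [hau]; exact hux
  have hay : G.Adj a y := by rw [hau]; exact huy
  obtain ⟨l1, h1⟩ := second_vertex hG p hp hax (hA x hax.symm)
  obtain ⟨l2, h2⟩ := second_vertex hG p hp hay (hA y hay.symm)
  rw [h1, List.cons.injEq, List.cons.injEq] at h2
  exact hxy h2.2.1

lemma exists_snd {c d : V} (q : G.Walk c d) (hne : c ≠ d) :
    ∃ (w : V) (l : List V), G.Adj c w ∧ q.support = c :: w :: l := by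
  cases q with
  | nil => exact absurd rfl hne
  | @cons _ w _ h q' =>
    refine ⟨w, q'.support.tail, h, ?_⟩
    rw [support_cons]
    congr 1
    exact support_eq_cons q'

/-- If a path with endpoints different from `u` passes through `u`, it passes
through both of `u`'s neighbours. -/
lemma mem_support_u (hG : G.IsAcyclic) (hxy : x ≠ y) (hN : G.neighborSet u = {x, y})
    {a b : V} (p : G.Walk a b) (hp : p.IsPath)
    (ha : a ≠ u) (hb : b ≠ u) (hu : u ∈ p.support) :
    x ∈ p.support ∧ y ∈ p.support := by
  obtain ⟨w1, l1, hw1adj, hw1⟩ := exists_snd (p.takeUntil u hu).reverse (Ne.symm ha)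
  obtain ⟨w2, l2, hw2adj, hw2⟩ := exists_snd (p.dropUntil u hu) (Ne.symm hb)
  have hw1mem : w1 ∈ (p.takeUntil u hu).support := by
    have : w1 ∈ (p.takeUntil u hu).reverse.support := by rw [hw1]; simp
    rwa [support_reverse, List.mem_reverse] at this
  have hw2mem : w2 ∈ (p.dropUntil u hu).support.tail := by
    rw [hw2]; simp
  have hw1w2 : w1 ≠ w2 := by
    have hnodup : ((p.takeUntil u hu).support ++ (p.dropUntil u hu).support.tail).Nodup := by
      rw [← support_append, take_spec]
      exact hp.support_nodup
    exact fun h => (List.disjoint_of_nodup_append hnodup) hw1mem (h ▸ hw2mem)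
  have hw1p : w1 ∈ p.support := p.support_takeUntil_subset hu hw1mem
  have hw2p : w2 ∈ p.support := p.support_dropUntil_subset hu (List.mem_of_mem_tail hw2mem)
  have hw1xy : w1 = x ∨ w1 = y := (adj_u_iff hN).1 hw1adj
  have hw2xy : w2 = x ∨ w2 = y := (adj_u_iff hN).1 hw2adj
  rcases hw1xy with rfl | rfl <;> rcases hw2xy with rfl | rfl
  · exact absurd rfl hw1w2
  · exact ⟨hw1p, hw2p⟩
  · exact ⟨hw2p, hw1p⟩
  · exact absurd rfl hw1w2

lemma exists_path_between {a b c d : V} (p : G.Walk a b) (hcm : c ∈ p.support)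
    (hdm : d ∈ p.support) :
    ∃ q : G.Walk c d, q.IsPath ∧ ∀ z ∈ q.support, z ∈ p.support := by
  by_cases hd1 : d ∈ (p.takeUntil c hcm).support
  · refine ⟨((p.takeUntil c hcm).dropUntil d hd1).reverse.bypass, bypass_isPath _, ?_⟩
    intro z hz
    have h1 := support_bypass_subset _ hz
    rw [support_reverse, List.mem_reverse] at h1
    exact p.support_takeUntil_subset hcm (((p.takeUntil c hcm).support_dropUntil_subset hd1) h1)
  · have hd2 : d ∈ (p.dropUntil c hcm).support := by
      have h0 := hdm
      rw [← p.take_spec hcm, mem_support_append_iff] at h0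
      exact h0.resolve_left hd1
    refine ⟨((p.dropUntil c hcm).takeUntil d hd2).bypass, bypass_isPath _, ?_⟩
    intro z hz
    exact p.support_dropUntil_subset hcm
      (((p.dropUntil c hcm).support_takeUntil_subset hd2) (support_bypass_subset _ hz))

/-- Conversely, a path through both neighbours of `u` passes through `u`. -/
lemma u_mem_support (hG : G.IsAcyclic) (hxy : x ≠ y) (hN : G.neighborSet u = {x, y})
    {a b : V} (p : G.Walk a b)
    (hx : x ∈ p.support) (hy : y ∈ p.support) : u ∈ p.support := by
  by_contra hu
  have hux : G.Adj u x := (adj_u_iff hN).2 (Or.inl rfl)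
  have huy : G.Adj u y := (adj_u_iff hN).2 (Or.inr rfl)
  obtain ⟨q, hq, hsub⟩ := exists_path_between p hx hy
  have h2 : (Walk.cons hux.symm (Walk.cons huy Walk.nil) : G.Walk x y).IsPath := by
    simp [cons_isPath_iff, hxy, hux.ne', huy.ne]
  have heq : q = Walk.cons hux.symm (Walk.cons huy Walk.nil) :=
    congrArg Subtype.val (hG.path_unique ⟨q, hq⟩ ⟨_, h2⟩)
  apply hu
  apply hsub
  rw [heq]
  simp [support_cons]

lemma contract_walk (hG : G.IsAcyclic) (hxy : x ≠ y) (hN : G.neighborSet u = {x, y}) :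
    ∀ (n : ℕ) {a b : V} (p : G.Walk a b), p.length = n → p.IsPath →
    ∀ (ha : a ≠ u) (hb : b ≠ u),
    ∃ q : (SmoothVertexAt G u).Walk ⟨a, ha⟩ ⟨b, hb⟩, q.IsPath ∧
      q.support.map Subtype.val = p.support.filter (fun z => z ≠ u) := by
  intro n
  induction n using Nat.strong_induction_on with
  | _ n ih =>
    intro a b p hlen hp ha hb
    cases p with
    | nil => exact ⟨Walk.nil, by simp, by simp [ha]⟩
    | @cons _ c _ h p' =>
      by_cases hcu : c = u
      · cases p' with
        | nil => exact absurd hcu hb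
        | @cons _ d _ h2 p'' =>
          have hd : d ≠ u := by
            have : G.Adj u d := by rw [← hcu]; exact h2
            exact this.ne'
          have hp'' : p''.IsPath := hp.of_cons.of_cons
          have hlt : p''.length < n := by
            subst hlen; simp [Walk.length_cons]
          obtain ⟨q'', hq'', hsup⟩ := ih p''.length hlt p'' rfl hp'' hd hb
          have hans : a ∉ (Walk.cons h2 p'').support := ((cons_isPath_iff h _).1 hp).2
          rw [support_cons] at hans
          have hanp : a ∉ p''.support := fun hm => hans (List.mem_cons_of_mem _ hm)
          have hadn : a ≠ d := fun hm =>
            hans (List.mem_cons_of_mem _ (by rw [hm]; exact p''.start_mem_support))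
          have hadj : (SmoothVertexAt G u).Adj ⟨a, ha⟩ ⟨d, hd⟩ :=
            Or.inr ⟨by simp [Subtype.ext_iff, hadn], show G.Adj a u from hcu ▸ h,
              show G.Adj u d from hcu ▸ h2⟩
          refine ⟨Walk.cons hadj q'', ?_, ?_⟩
          · rw [cons_isPath_iff]
            refine ⟨hq'', fun hmem => hanp ?_⟩
            have hmm : (a : V) ∈ q''.support.map Subtype.val :=
              List.mem_map_of_mem hmem
            rw [hsup] at hmm
            exact List.mem_of_mem_filter hmm
          · rw [support_cons, List.map_cons, hsup, support_cons, support_cons,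
              List.filter_cons, List.filter_cons]
            simp [ha, hcu]
      · have hp' : p'.IsPath := hp.of_cons
        have hlt : p'.length < n := by subst hlen; simp
        obtain ⟨q', hq', hsup⟩ := ih p'.length hlt p' rfl hp' hcu hb
        have hadj : (SmoothVertexAt G u).Adj ⟨a, ha⟩ ⟨c, hcu⟩ := Or.inl h
        have hanp : a ∉ p'.support := ((cons_isPath_iff h _).1 hp).2
        refine ⟨Walk.cons hadj q', ?_, ?_⟩
        · rw [cons_isPath_iff]
          refine ⟨hq', fun hmem => hanp ?_⟩
          have hmm : (a : V) ∈ q'.support.map Subtype.val := List.mem_map_of_mem hmem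
          rw [hsup] at hmm
          exact List.mem_of_mem_filter hmm
        · rw [support_cons, List.map_cons, hsup, support_cons, List.filter_cons]
          simp [ha]

lemma expand_walk (hG : G.IsAcyclic) (hxy : x ≠ y) (hN : G.neighborSet u = {x, y}) :
    ∀ (n : ℕ) {a b : {v : V // v ≠ u}} (q : (SmoothVertexAt G u).Walk a b),
    q.length = n → q.IsPath →
    ∃ p : G.Walk ↑a ↑b, p.IsPath ∧
      q.support.map Subtype.val = p.support.filter (fun z => z ≠ u) := by
  intro n
  induction n using Nat.strong_induction_on with
  | _ n ih =>
    intro a b q hlen hq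
    cases q with
    | nil => exact ⟨Walk.nil, by simp, by simp [a.2]⟩
    | @cons _ c _ h q' =>
      have hq' : q'.IsPath := hq.of_cons
      have hanq : a ∉ q'.support := ((cons_isPath_iff h _).1 hq).2
      have hlt : q'.length < n := by subst hlen; simp
      obtain ⟨p', hp', hsup⟩ := ih q'.length hlt q' rfl hq'
      have hamem : ∀ w : {v : V // v ≠ u}, (↑w : V) ∈ p'.support ↔ w ∈ q'.support := by
        intro w
        constructor
        · intro hm
          have : (↑w : V) ∈ p'.support.filter (fun z => z ≠ u) := by
            rw [List.mem_filter]
            exact ⟨hm, by simpa using w.2⟩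
          rw [← hsup] at this
          obtain ⟨w', hw', hww⟩ := List.mem_map.1 this
          rwa [Subtype.ext hww.symm]  -- careful direction
        · intro hm
          have : (↑w : V) ∈ q'.support.map Subtype.val := List.mem_map_of_mem hm
          rw [hsup] at this
          exact List.mem_of_mem_filter this
      by_cases hadj : G.Adj ↑a ↑c
      · refine ⟨Walk.cons hadj p', ?_, ?_⟩
        · rw [cons_isPath_iff]
          exact ⟨hp', fun hm => hanq ((hamem a).1 hm)⟩
        · rw [support_cons, List.map_cons, hsup, support_cons, List.filter_cons]
          simp [a.2]
      · obtain ⟨hne, h1, h2⟩ := h.resolve_left hadj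
        have hup : u ∉ p'.support := by
          intro hup
          have hxyp := mem_support_u hG hxy hN p' hp' c.2 b.2 hup
          have haxy : (↑a : V) = x ∨ (↑a : V) = y := (adj_u_iff hN).1 h1.symm
          have hap : (↑a : V) ∈ p'.support := by
            rcases haxy with h' | h' <;> rw [h'] <;> [exact hxyp.1; exact hxyp.2]
          exact hanq ((hamem a).1 hap)
        refine ⟨Walk.cons h1 (Walk.cons h2 p'), ?_, ?_⟩
        · rw [cons_isPath_iff, cons_isPath_iff]
          refine ⟨⟨hp', hup⟩, ?_⟩
          rw [support_cons]
          intro hm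
          rcases List.mem_cons.1 hm with h' | h'
          · exact a.2 h'
          · exact hanq ((hamem a).1 h')
        · rw [support_cons, List.map_cons, hsup, support_cons, support_cons,
            List.filter_cons, List.filter_cons]
          simp [a.2]

lemma smooth_connected (hc : G.Connected) (hG : G.IsAcyclic) (hxy : x ≠ y)
    (hN : G.neighborSet u = {x, y}) : (SmoothVertexAt G u).Connected := by
  have hxu : x ≠ u := ((adj_u_iff hN).2 (Or.inl rfl)).ne'
  rw [connected_iff]
  refine ⟨fun a b => ?_, ⟨⟨x, hxu⟩⟩⟩
  obtain ⟨w⟩ := hc.preconnected (↑a) (↑b)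
  obtain ⟨q, hq, -⟩ := contract_walk hG hxy hN w.bypass.length w.bypass rfl
    w.bypass_isPath a.2 b.2
  exact ⟨q⟩

lemma smooth_acyclic (hG : G.IsAcyclic) (hxy : x ≠ y)
    (hN : G.neighborSet u = {x, y}) : (SmoothVertexAt G u).IsAcyclic := by
  rw [isAcyclic_iff_path_unique]
  intro a b q1 q2
  obtain ⟨p1, hp1, hs1⟩ := expand_walk hG hxy hN q1.1.length q1.1 rfl q1.2
  obtain ⟨p2, hp2, hs2⟩ := expand_walk hG hxy hN q2.1.length q2.1 rfl q2.2
  have hpp : p1 = p2 := congrArg Subtype.val (hG.path_unique ⟨p1, hp1⟩ ⟨p2, hp2⟩)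
  have hsup : q1.1.support.map Subtype.val = q2.1.support.map Subtype.val := by
    rw [hs1, hs2, hpp]
  have heq := List.map_injective_iff.2 Subtype.val_injective hsup
  exact Subtype.ext (walk_eq_of_support_eq _ _ heq)

lemma smooth_maxset_F (hc : G.Connected) (hG : G.IsAcyclic) (hxy : x ≠ y)
    (hN : G.neighborSet u = {x, y}) (s : Set V) (hs : IsMaxGeodesicSet G s) :
    IsMaxGeodesicSet (SmoothVertexAt G u) (Subtype.val ⁻¹' s) := by
  have hc' := smooth_connected hc hG hxy hN
  have hG' := smooth_acyclic hG hxy hN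
  rw [isMaxGeodesicSet_iff hc hG] at hs
  rw [isMaxGeodesicSet_iff hc' hG']
  obtain ⟨a, b, p, hp, hA, hB, rfl⟩ := hs
  have ha : a ≠ u := endpoint_ne hG hxy hN p hp hA
  have hb : b ≠ u := by
    refine endpoint_ne hG hxy hN p.reverse hp.reverse ?_
    intro w hw
    rw [support_reverse, List.mem_reverse]
    exact hB w hw.symm
  obtain ⟨q, hq, hsup⟩ := contract_walk hG hxy hN p.length p rfl hp ha hb
  have hmem : ∀ w : {v : V // v ≠ u}, w ∈ q.support ↔ (w : V) ∈ p.support := by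
    intro w
    constructor
    · intro hm
      have h1 := List.mem_map_of_mem (f := Subtype.val) hm
      rw [hsup] at h1
      exact List.mem_of_mem_filter h1
    · intro hm
      have h1 : (w : V) ∈ p.support.filter (fun z => z ≠ u) :=
        List.mem_filter.2 ⟨hm, by simpa using w.2⟩
      rw [← hsup] at h1
      obtain ⟨w', hw', hww⟩ := List.mem_map.1 h1
      exact Subtype.ext hww ▸ hw'
  refine ⟨⟨a, ha⟩, ⟨b, hb⟩, q, hq, ?_, ?_, ?_⟩
  · rintro w (hw | ⟨hne, h1, h2⟩)
    · exact (hmem w).2 (hA _ hw)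
    · have hu : u ∈ p.support := hA u h2
      have hxys := mem_support_u hG hxy hN p hp ha hb hu
      have hwxy : (↑w : V) = x ∨ (↑w : V) = y := (adj_u_iff hN).1 h1.symm
      refine (hmem w).2 ?_
      rcases hwxy with h' | h' <;> rw [h'] <;> [exact hxys.1; exact hxys.2]
  · rintro w (hw | ⟨hne, h1, h2⟩)
    · exact (hmem w).2 (hB _ hw)
    · have hu : u ∈ p.support := hB u h1
      have hxys := mem_support_u hG hxy hN p hp ha hb hu
      have hwxy : (↑w : V) = x ∨ (↑w : V) = y := (adj_u_iff hN).1 h2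
      refine (hmem w).2 ?_
      rcases hwxy with h' | h' <;> rw [h'] <;> [exact hxys.1; exact hxys.2]
  · ext w
    simp only [Set.mem_preimage, Set.mem_setOf_eq]
    exact ((hmem w).symm : _)

/-- The inverse set-level map of smoothing: re-insert `u` when both its
neighbours appear. -/
def Eset (u x y : V) (t : Set {v : V // v ≠ u}) : Set V :=
  {w | (∃ h : w ≠ u, (⟨w, h⟩ : {v : V // v ≠ u}) ∈ t) ∨
       (w = u ∧ (∃ hx : x ≠ u, (⟨x, hx⟩ : {v : V // v ≠ u}) ∈ t) ∧
        (∃ hy : y ≠ u, (⟨y, hy⟩ : {v : V // v ≠ u}) ∈ t))}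

lemma smooth_maxset_E (hc : G.Connected) (hG : G.IsAcyclic) (hxy : x ≠ y)
    (hN : G.neighborSet u = {x, y}) (t : Set {v : V // v ≠ u})
    (ht : IsMaxGeodesicSet (SmoothVertexAt G u) t) :
    IsMaxGeodesicSet G (Eset u x y t) := by
  have hc' := smooth_connected hc hG hxy hN
  have hG' := smooth_acyclic hG hxy hN
  have hux : G.Adj u x := (adj_u_iff hN).2 (Or.inl rfl)
  have huy : G.Adj u y := (adj_u_iff hN).2 (Or.inr rfl)
  rw [isMaxGeodesicSet_iff hc' hG'] at ht
  rw [isMaxGeodesicSet_iff hc hG]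
  obtain ⟨a, b, q, hq, hA, hB, rfl⟩ := ht
  obtain ⟨p, hp, hsup⟩ := expand_walk hG hxy hN q.length q rfl hq
  have hmem : ∀ w : {v : V // v ≠ u}, w ∈ q.support ↔ (w : V) ∈ p.support := by
    intro w
    constructor
    · intro hm
      have h1 := List.mem_map_of_mem (f := Subtype.val) hm
      rw [hsup] at h1
      exact List.mem_of_mem_filter h1
    · intro hm
      have h1 : (w : V) ∈ p.support.filter (fun z => z ≠ u) :=
        List.mem_filter.2 ⟨hm, by simpa using w.2⟩
      rw [← hsup] at h1
      obtain ⟨w', hw', hww⟩ := List.mem_map.1 h1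
      exact Subtype.ext hww ▸ hw'
  refine ⟨↑a, ↑b, p, hp, ?_, ?_, ?_⟩
  · intro w hw
    by_cases hwu : w = u
    · rw [hwu] at hw ⊢
      have haxy : (↑a : V) = x ∨ (↑a : V) = y := (adj_u_iff hN).1 hw
      have hothers : x ∈ p.support ∧ y ∈ p.support := by
        rcases haxy with h' | h'
        · have hadj : (SmoothVertexAt G u).Adj ⟨y, huy.ne'⟩ a :=
            Or.inr ⟨by simp only [ne_eq, Subtype.ext_iff, h']
                       exact fun hh => hxy hh.symm, huy.symm, hw⟩
          have hy : y ∈ p.support := (hmem _).1 (hA _ hadj)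
          have hx : x ∈ p.support := h' ▸ p.start_mem_support
          exact ⟨hx, hy⟩
        · have hadj : (SmoothVertexAt G u).Adj ⟨x, hux.ne'⟩ a :=
            Or.inr ⟨by simp [Subtype.ext_iff, h', hxy], hux.symm, hw⟩
          have hx : x ∈ p.support := (hmem _).1 (hA _ hadj)
          have hy : y ∈ p.support := h' ▸ p.start_mem_support
          exact ⟨hx, hy⟩
      exact u_mem_support hG hxy hN p hothers.1 hothers.2
    · have hadj : (SmoothVertexAt G u).Adj ⟨w, hwu⟩ a := Or.inl hw
      exact (hmem _).1 (hA _ hadj)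
  · intro w hw
    by_cases hwu : w = u
    · rw [hwu] at hw ⊢
      have hbxy : (↑b : V) = x ∨ (↑b : V) = y := (adj_u_iff hN).1 hw.symm
      have hothers : x ∈ p.support ∧ y ∈ p.support := by
        rcases hbxy with h' | h'
        · have hadj : (SmoothVertexAt G u).Adj b ⟨y, huy.ne'⟩ :=
            Or.inr ⟨by simp [Subtype.ext_iff, h', hxy], hw, huy⟩
          have hy : y ∈ p.support := (hmem _).1 (hB _ hadj)
          have hx : x ∈ p.support := h' ▸ p.end_mem_support
          exact ⟨hx, hy⟩
        · have hadj : (SmoothVertexAt G u).Adj b ⟨x, hux.ne'⟩ :=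
            Or.inr ⟨by simp only [ne_eq, Subtype.ext_iff, h']
                       exact fun hh => hxy hh.symm, hw, hux⟩
          have hx : x ∈ p.support := (hmem _).1 (hB _ hadj)
          have hy : y ∈ p.support := h' ▸ p.end_mem_support
          exact ⟨hx, hy⟩
      exact u_mem_support hG hxy hN p hothers.1 hothers.2
    · have hadj : (SmoothVertexAt G u).Adj b ⟨w, hwu⟩ := Or.inl hw
      exact (hmem _).1 (hB _ hadj)
  · ext w
    simp only [Eset, Set.mem_setOf_eq]
    constructor
    · rintro (⟨h, hm⟩ | ⟨rfl, ⟨hx', hmx⟩, ⟨hy', hmy⟩⟩)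
      · exact (hmem _).1 hm
      · exact u_mem_support hG hxy hN p ((hmem _).1 hmx) ((hmem _).1 hmy)
    · intro hm
      by_cases hwu : w = u
      · rw [hwu] at hm ⊢
        have hxyp := mem_support_u hG hxy hN p hp a.2 b.2 hm
        exact Or.inr ⟨rfl, ⟨hux.ne', (hmem _).2 hxyp.1⟩, ⟨huy.ne', (hmem _).2 hxyp.2⟩⟩
      · exact Or.inl ⟨hwu, (hmem _).2 hm⟩

lemma FE_id (t : Set {v : V // v ≠ u}) :
    Subtype.val ⁻¹' (Eset u x y t) = t := by
  ext w
  simp only [Set.mem_preimage, Eset, Set.mem_setOf_eq]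
  constructor
  · rintro (⟨h, hm⟩ | ⟨heq, -⟩)
    · exact hm
    · exact absurd heq w.2
  · intro hm
    exact Or.inl ⟨w.2, hm⟩

lemma EF_id (hc : G.Connected) (hG : G.IsAcyclic) (hxy : x ≠ y)
    (hN : G.neighborSet u = {x, y}) (s : Set V) (hs : IsMaxGeodesicSet G s) :
    Eset u x y (Subtype.val ⁻¹' s) = s := by
  rw [isMaxGeodesicSet_iff hc hG] at hs
  obtain ⟨a, b, p, hp, hA, hB, rfl⟩ := hs
  have ha : a ≠ u := endpoint_ne hG hxy hN p hp hA
  have hb : b ≠ u := by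
    refine endpoint_ne hG hxy hN p.reverse hp.reverse ?_
    intro w hw
    rw [support_reverse, List.mem_reverse]
    exact hB w hw.symm
  ext w
  simp only [Eset, Set.mem_preimage, Set.mem_setOf_eq]
  constructor
  · rintro (⟨h, hm⟩ | ⟨rfl, ⟨hx', hmx⟩, ⟨hy', hmy⟩⟩)
    · exact hm
    · exact u_mem_support hG hxy hN p hmx hmy
  · intro hm
    by_cases hwu : w = u
    · rw [hwu] at hm ⊢
      have hxyp := mem_support_u hG hxy hN p hp ha hb hm
      have hxu : x ≠ u := ((adj_u_iff hN).2 (Or.inl rfl)).ne'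
      have hyu : y ≠ u := ((adj_u_iff hN).2 (Or.inr rfl)).ne'
      exact Or.inr ⟨rfl, ⟨hxu, hxyp.1⟩, ⟨hyu, hxyp.2⟩⟩
    · exact Or.inl ⟨hwu, hm⟩

lemma E_disjoint (t1 t2 : Set {v : V // v ≠ u}) (hd : Disjoint t1 t2) :
    Disjoint (Eset u x y t1) (Eset u x y t2) := by
  rw [Set.disjoint_left] at hd ⊢
  rintro w (⟨h, hm⟩ | ⟨rfl, ⟨hx', hmx⟩, -⟩)
  · rintro (⟨h2, hm2⟩ | ⟨heq, -⟩)
    · exact hd hm hm2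
    · exact h heq
  · rintro (⟨h2, -⟩ | ⟨-, ⟨hx2, hmx2⟩, -⟩)
    · exact h2 rfl
    · exact hd hmx hmx2

lemma smooth_gpack (hc : G.Connected) (hG : G.IsAcyclic) (hxy : x ≠ y)
    (hN : G.neighborSet u = {x, y}) :
    gpackNum G = gpackNum (SmoothVertexAt G u) :=
  gpack_eq_of_transfer (fun s => Subtype.val ⁻¹' s) (Eset u x y)
    (fun s hs => smooth_maxset_F hc hG hxy hN s hs)
    (fun s t hs ht h => by
      have h2 : Eset u x y (Subtype.val ⁻¹' s) = Eset u x y (Subtype.val ⁻¹' t) :=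
        congrArg _ h
      rwa [EF_id hc hG hxy hN s hs, EF_id hc hG hxy hN t ht] at h2)
    (fun s t _ _ hd => hd.preimage _)
    (fun t ht => smooth_maxset_E hc hG hxy hN t ht)
    (fun t1 t2 _ _ h => by
      have h2 : (Subtype.val ⁻¹' (Eset u x y t1) : Set {v : V // v ≠ u}) =
          Subtype.val ⁻¹' (Eset u x y t2) := congrArg _ h
      rwa [FE_id t1, FE_id t2] at h2)
    (fun t1 t2 _ _ hd => E_disjoint t1 t2 hd)

end Smooth

end GpackAux

theorem gpack_smoothing {V W : Type} (T : SimpleGraph V) (T' : SimpleGraph W)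
    (hc : T.Connected) (ha : T.IsAcyclic)
    (hchain : Relation.ReflTransGen SmoothStep ⟨V, T⟩ ⟨W, T'⟩)
    (hno2 : ∀ u : W, ¬ ∃ x y : W, x ≠ y ∧ T'.neighborSet u = {x, y}) :
    gpackNum T = gpackNum T' := by
  classical
  have key : ∀ B : GraphOn, Relation.ReflTransGen SmoothStep ⟨V, T⟩ B →
      B.G.Connected ∧ B.G.IsAcyclic ∧ gpackNum T = gpackNum B.G := by
    intro B hB
    induction hB with
    | refl => exact ⟨hc, ha, rfl⟩
    | @tail A C hAC hstep ih =>
      obtain ⟨hcA, haA, hgp⟩ := ih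
      obtain ⟨u, x, y, hxy, hN, ⟨e⟩⟩ := hstep
      haveI : DecidableEq A.V := Classical.decEq _
      haveI : DecidableEq C.V := Classical.decEq _
      haveI : DecidableEq {v : A.V // v ≠ u} := Classical.decEq _
      have hc' := GpackAux.smooth_connected hcA haA hxy hN
      have hG' := GpackAux.smooth_acyclic haA hxy hN
      have hcC : C.G.Connected := e.connected_iff.2 hc'
      have haC : C.G.IsAcyclic := GpackAux.iso_acyclic e.symm hG'
      refine ⟨hcC, haC, ?_⟩
      calc gpackNum T = gpackNum A.G := hgp
        _ = gpackNum (SmoothVertexAt A.G u) := GpackAux.smooth_gpack hcA haA hxy hN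
        _ = gpackNum C.G := (GpackAux.iso_gpack e hcC haC).symm
  exact (key ⟨W, T'⟩ hchain).2.2
end

section
/- Let T be a tree with no vertices of degree 2, let u be an end support vertex of T, and let u₁,…,u_s be the leaves adjacent to u. Then gpack(T) = gpack(T − {u, u₁, …, u_s}) + 1, and moreover there exists a maximum geodesic packing of T containing the path u₁ u u₂. -/
open SimpleGraph

/-- A leaf: a vertex with exactly one neighbor. -/
def IsLeafVertex {V : Type*} (G : SimpleGraph V) (w : V) : Prop :=
  ∃! x, G.Adj w x

namespace GeoAux
variable {V : Type*} {G : SimpleGraph V}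

lemma geo_of_path (hc : G.Connected) (ha : G.IsAcyclic) {a b : V} {p : G.Walk a b}
    (hp : p.IsPath) : IsGeodesic G p := by
  obtain ⟨q, hq, hlen⟩ := hc.exists_path_of_dist a b
  have h2 : (⟨p, hp⟩ : G.Path a b) = ⟨q, hq⟩ := isAcyclic_iff_path_unique.mp ha _ _
  exact ⟨hp, by rw [← hlen]; exact congrArg SimpleGraph.Walk.length (congrArg Subtype.val h2)⟩

lemma exists_adj_support {x y : V} (q : G.Walk x y) (hn : x ≠ y) :
    ∃ n, G.Adj x n ∧ n ∈ q.support.tail := by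
  cases q with
  | nil => exact absurd rfl hn
  | cons h q' => exact ⟨_, h, by simp⟩

lemma two_adj_eq (ha : G.IsAcyclic) {x y : V} {q : G.Walk x y} (hq : q.IsPath)
    {w₁ w₂ : V} (h1 : G.Adj x w₁) (h2 : G.Adj x w₂)
    (m1 : w₁ ∈ q.support) (m2 : w₂ ∈ q.support) : w₁ = w₂ := by
  classical
  cases q with
  | nil =>
    rw [SimpleGraph.Walk.mem_support_nil_iff] at m1
    exact ((m1 ▸ h1).ne rfl).elim
  | @cons _ c _ h q' =>
    have key : ∀ w, G.Adj x w → w ∈ (SimpleGraph.Walk.cons h q').support → w = c := by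
      intro w hw hwmem
      by_contra hwc
      have hq' : q'.IsPath ∧ x ∉ q'.support := by
        rw [SimpleGraph.Walk.cons_isPath_iff] at hq; exact hq
      have hwq' : w ∈ q'.support := by
        rw [SimpleGraph.Walk.support_cons] at hwmem
        rcases List.mem_cons.mp hwmem with h' | h'
        · exact absurd h' hw.ne'
        · exact h'
      set t := q'.takeUntil w hwq' with ht
      have htp : t.IsPath := hq'.1.takeUntil _
      have hxt : x ∉ t.support := fun hx => hq'.2 (q'.support_takeUntil_subset _ hx)
      have hcyc : (SimpleGraph.Walk.cons h (t.concat hw.symm)).IsCycle := by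
        rw [SimpleGraph.Walk.cons_isCycle_iff]
        constructor
        · rw [← SimpleGraph.Walk.isPath_reverse_iff, SimpleGraph.Walk.reverse_concat]
          rw [SimpleGraph.Walk.cons_isPath_iff]
          refine ⟨htp.reverse, ?_⟩
          rw [SimpleGraph.Walk.support_reverse]
          simpa using hxt
        · intro hmem
          rw [SimpleGraph.Walk.edges_concat, List.concat_eq_append] at hmem
          rcases List.mem_append.mp hmem with h' | h'
          · exact hxt (t.fst_mem_support_of_mem_edges h')
          · rw [List.mem_singleton, Sym2.eq_iff] at h'
            rcases h' with ⟨h1', _⟩ | ⟨_, h2'⟩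
            · exact hw.ne h1'
            · exact hwc h2'.symm
      exact ha _ hcyc
    exact (key _ h1 m1).trans (key _ h2 m2).symm

lemma interior_two {a b : V} {p : G.Walk a b} (hp : p.IsPath) {x : V}
    (hx : x ∈ p.support) (hxa : x ≠ a) (hxb : x ≠ b) :
    ∃ n₁ n₂, n₁ ≠ n₂ ∧ G.Adj x n₁ ∧ G.Adj x n₂ ∧ n₁ ∈ p.support ∧ n₂ ∈ p.support := by
  classical
  obtain ⟨n₁, hn₁, hn₁m⟩ := exists_adj_support (p.takeUntil x hx).reverse hxa
  obtain ⟨n₂, hn₂, hn₂m⟩ := exists_adj_support (p.dropUntil x hx) hxb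
  have hm1 : n₁ ∈ (p.takeUntil x hx).support := by
    have := List.mem_of_mem_tail hn₁m
    rwa [SimpleGraph.Walk.support_reverse, List.mem_reverse] at this
  have hsupp : p.support = (p.takeUntil x hx).support ++ (p.dropUntil x hx).support.tail := by
    conv_lhs => rw [← p.take_spec hx]
    rw [SimpleGraph.Walk.support_append]
  have hnod : ((p.takeUntil x hx).support ++ (p.dropUntil x hx).support.tail).Nodup := by
    rw [← hsupp]; exact hp.support_nodup
  refine ⟨n₁, n₂, ?_, hn₁, hn₂, ?_, ?_⟩
  · intro hEq
    exact (List.disjoint_of_nodup_append hnod) hm1 (hEq ▸ hn₂m)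
  · rw [hsupp]; exact List.mem_append_left _ hm1
  · rw [hsupp]; exact List.mem_append_right _ hn₂m

lemma exists_adj (hc : G.Connected) (hnt : Nontrivial V) (v : V) : ∃ w, G.Adj v w := by
  obtain ⟨y, hy⟩ := exists_ne v
  obtain ⟨q⟩ := hc v y
  obtain ⟨n, hn, _⟩ := exists_adj_support q hy.symm
  exact ⟨n, hn⟩

lemma maxgeo_iff (hc : G.Connected) (ha : G.IsAcyclic) (hnt : Nontrivial V)
    {a b : V} (p : G.Walk a b) :
    IsMaxGeodesic G p ↔ p.IsPath ∧ a ≠ b ∧ IsLeafVertex G a ∧ IsLeafVertex G b := by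
  constructor
  · rintro ⟨⟨hp, -⟩, hcons, hconcat⟩
    have hab : a ≠ b := by
      rintro rfl
      have hnil : p = SimpleGraph.Walk.nil := (SimpleGraph.Walk.isPath_iff_eq_nil (p := p)).mp hp
      obtain ⟨w, hw⟩ := exists_adj hc hnt a
      refine hcons w hw.symm (geo_of_path hc ha ?_)
      rw [SimpleGraph.Walk.cons_isPath_iff, hnil]
      simpa using hw.ne'
    obtain ⟨n, hn, hnt'⟩ := exists_adj_support p hab
    obtain ⟨m, hm, hmt'⟩ := exists_adj_support p.reverse hab.symm
    refine ⟨hp, hab, ⟨n, hn, ?_⟩, ⟨m, hm, ?_⟩⟩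
    · intro w hw
      by_contra hwn
      have hws : w ∉ p.support := fun hws =>
        hwn (two_adj_eq ha hp hw hn hws (List.mem_of_mem_tail hnt'))
      refine hcons w hw.symm (geo_of_path hc ha ?_)
      rw [SimpleGraph.Walk.cons_isPath_iff]
      exact ⟨hp, hws⟩
    · intro w hw
      by_contra hwn
      have hws : w ∉ p.reverse.support := fun hws =>
        hwn (two_adj_eq ha hp.reverse hw hm hws (List.mem_of_mem_tail hmt'))
      refine hconcat w hw (geo_of_path hc ha ?_)
      rw [← SimpleGraph.Walk.isPath_reverse_iff, SimpleGraph.Walk.reverse_concat,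
        SimpleGraph.Walk.cons_isPath_iff]
      exact ⟨hp.reverse, hws⟩
  · rintro ⟨hp, hab, ⟨a', ha1, ha2⟩, ⟨b', hb1, hb2⟩⟩
    refine ⟨geo_of_path hc ha hp, ?_, ?_⟩
    · intro w hw hgeo
      obtain ⟨n, hn, hnt'⟩ := exists_adj_support p hab
      have : w = n := (ha2 w hw.symm).trans (ha2 n hn).symm
      have hps := hgeo.1
      rw [SimpleGraph.Walk.cons_isPath_iff] at hps
      exact hps.2 (this ▸ List.mem_of_mem_tail hnt')
    · intro w hw hgeo
      obtain ⟨m, hm, hmt'⟩ := exists_adj_support p.reverse hab.symm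
      have : w = m := (hb2 w hw).trans (hb2 m hm).symm
      have hps := hgeo.1
      rw [← SimpleGraph.Walk.isPath_reverse_iff, SimpleGraph.Walk.reverse_concat,
        SimpleGraph.Walk.cons_isPath_iff] at hps
      exact hps.2 (this ▸ List.mem_of_mem_tail hmt')

lemma lift_walk {s : Set V} {a b : V} (p : G.Walk a b) (ha : a ∈ s) (hb : b ∈ s)
    (hs : ∀ x ∈ p.support, x ∈ s) :
    ∃ q : (G.induce s).Walk ⟨a, ha⟩ ⟨b, hb⟩,
      q.map (SimpleGraph.Embedding.induce s).toHom = p := by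
  induction p with
  | nil => exact ⟨SimpleGraph.Walk.nil, rfl⟩
  | @cons x c y h p ih =>
    have hc' : c ∈ s := hs c (by simp)
    obtain ⟨q, hq⟩ := ih hc' hb (fun z hz => hs z (by simp [hz]))
    exact ⟨SimpleGraph.Walk.cons (by exact h) q, by subst hq; rfl⟩
end GeoAux

lemma packing_empty {V : Type*} (G : SimpleGraph V) :
    IsGeodesicPacking G ↑(∅ : Finset (Set V)) := by
  constructor
  · simp
  · simp

lemma gpack_bdd {V : Type*} [Fintype V] (G : SimpleGraph V) :
    BddAbove {k | ∃ P : Finset (Set V), IsGeodesicPacking G ↑P ∧ P.card = k} := by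
  classical
  exact ⟨Fintype.card (Set V), fun k ⟨P, _, hP⟩ => hP ▸ P.card_le_univ⟩

lemma gpack_spec {V : Type*} [Fintype V] (G : SimpleGraph V) :
    ∃ P : Finset (Set V), IsGeodesicPacking G ↑P ∧ P.card = gpackNum G := by
  have h := Nat.sSup_mem (s := {k | ∃ P : Finset (Set V), IsGeodesicPacking G ↑P ∧ P.card = k})
    ⟨0, ⟨∅, packing_empty G, rfl⟩⟩ (gpack_bdd G)
  exact h

lemma le_gpack {V : Type*} [Fintype V] (G : SimpleGraph V) {P : Finset (Set V)}
    (h : IsGeodesicPacking G ↑P) : P.card ≤ gpackNum G :=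
  le_csSup (gpack_bdd G) ⟨P, h, rfl⟩

theorem gpack_endSupport {V : Type*} [Fintype V] (T : SimpleGraph V)
    (hc : T.Connected) (ha : T.IsAcyclic)
    (hno2 : ∀ v : V, ¬ ∃ x y : V, x ≠ y ∧ T.neighborSet v = {x, y})
    (u : V) (hsupp : ∃ w, T.Adj u w ∧ IsLeafVertex T w)
    (hend : ∀ w₁ w₂, T.Adj u w₁ → T.Adj u w₂ → ¬ IsLeafVertex T w₁ →
      ¬ IsLeafVertex T w₂ → w₁ = w₂) :
    gpackNum T =
      gpackNum (T.induce {v : V | v ≠ u ∧ ¬ (T.Adj u v ∧ IsLeafVertex T v)}) + 1 ∧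
    ∀ u₁ u₂ : V, u₁ ≠ u₂ → T.Adj u u₁ → T.Adj u u₂ → IsLeafVertex T u₁ →
      IsLeafVertex T u₂ →
      ∃ Psi : Finset (Set V), IsGeodesicPacking T ↑Psi ∧ Psi.card = gpackNum T ∧
        ({u₁, u, u₂} : Set V) ∈ Psi := by
  classical
  obtain ⟨w₀, hw₀adj, hw₀leaf⟩ := hsupp
  set s : Set V := {v : V | v ≠ u ∧ ¬ (T.Adj u v ∧ IsLeafVertex T v)} with hsdef
  haveI : Fintype ↥s := Fintype.ofFinite ↥s
  have hnt : Nontrivial V := ⟨u, w₀, hw₀adj.ne⟩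
  have husnot : u ∉ s := fun h => h.1 rfl
  have hleafnbr_not : ∀ z, T.Adj u z → IsLeafVertex T z → z ∉ s :=
    fun z h1 h2 hz => hz.2 ⟨h1, h2⟩
  have hnotin : ∀ z, z ∉ s → z = u ∨ (T.Adj u z ∧ IsLeafVertex T z) := by
    intro z hz
    by_contra hcon
    push_neg at hcon
    exact hz ⟨hcon.1, fun h => hcon.2 h.1 h.2⟩
  have hleaf_unique : ∀ z, IsLeafVertex T z → ∀ y y', T.Adj z y → T.Adj z y' → y = y' := by
    rintro z ⟨x, hx1, hx2⟩ y y' hy hy'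
    rw [hx2 y hy, hx2 y' hy']
  have hleafnbr_u : ∀ z, T.Adj u z → IsLeafVertex T z → ∀ y, T.Adj z y → y = u :=
    fun z h1 h2 y hy => hleaf_unique z h2 y u hy h1.symm
  have hleaf_endpoint : ∀ {a b : V} (p : T.Walk a b), p.IsPath →
      ∀ x ∈ p.support, IsLeafVertex T x → x = a ∨ x = b := by
    intro a b p hp x hx hxl
    by_contra hcon
    push_neg at hcon
    obtain ⟨n₁, n₂, hne, h1, h2, -, -⟩ := GeoAux.interior_two hp hx hcon.1 hcon.2
    exact hne (hleaf_unique x hxl n₁ n₂ h1 h2)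
  have hu_support : ∀ {a b : V} (p : T.Walk a b), p.IsPath → a ∈ s → b ∈ s →
      u ∉ p.support := by
    intro a b p hp has hbs hu
    have hua : u ≠ a := fun h => husnot (h ▸ has)
    have hub : u ≠ b := fun h => husnot (h ▸ hbs)
    obtain ⟨n₁, n₂, hne, h1, h2, hm1, hm2⟩ := GeoAux.interior_two hp hu hua hub
    have hex : ∃ n, T.Adj u n ∧ IsLeafVertex T n ∧ n ∈ p.support := by
      by_cases hl1 : IsLeafVertex T n₁
      · exact ⟨n₁, h1, hl1, hm1⟩
      · by_cases hl2 : IsLeafVertex T n₂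
        · exact ⟨n₂, h2, hl2, hm2⟩
        · exact absurd (hend n₁ n₂ h1 h2 hl1 hl2) hne
    obtain ⟨n, hn1, hn2, hn3⟩ := hex
    rcases hleaf_endpoint p hp n hn3 hn2 with rfl | rfl
    · exact hleafnbr_not _ hn1 hn2 has
    · exact hleafnbr_not _ hn1 hn2 hbs
  have hcore : ∀ {a b : V} (p : T.Walk a b), p.IsPath → a ∈ s → b ∈ s →
      ∀ x ∈ p.support, x ∈ s := by
    intro a b p hp has hbs x hx
    by_contra hxs
    rcases hnotin x hxs with rfl | ⟨hadj, hleaf⟩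
    · exact hu_support p hp has hbs hx
    · rcases hleaf_endpoint p hp x hx hleaf with rfl | rfl
      · exact hxs has
      · exact hxs hbs
  have hconn' : s.Nonempty → (T.induce s).Connected := by
    rintro ⟨x0, hx0⟩
    rw [connected_iff]
    refine ⟨?_, ⟨⟨x0, hx0⟩⟩⟩
    rintro ⟨x, hx⟩ ⟨y, hy⟩
    obtain ⟨p, hp, -⟩ := hc.exists_path_of_dist x y
    obtain ⟨q, -⟩ := GeoAux.lift_walk p hx hy (hcore p hp hx hy)
    exact ⟨q⟩
  have hinj : Function.Injective
      ⇑((SimpleGraph.Embedding.induce s).toHom : T.induce s →g T) :=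
    fun a b h => Subtype.ext h
  have hac' : (T.induce s).IsAcyclic := by
    rw [isAcyclic_iff_path_unique]
    intro x y p q
    have h2 := isAcyclic_iff_path_unique.mp ha
      (p.map (SimpleGraph.Embedding.induce s).toHom hinj)
      (q.map (SimpleGraph.Embedding.induce s).toHom hinj)
    have h3 : (p : (T.induce s).Walk x y).map (SimpleGraph.Embedding.induce s).toHom
        = (q : (T.induce s).Walk x y).map (SimpleGraph.Embedding.induce s).toHom :=
      congrArg Subtype.val h2
    exact Subtype.ext (SimpleGraph.Walk.map_injective_of_injective hinj x y h3)
  have hnonleaf_two : ∀ x : V, (∃ y, T.Adj x y) → ¬IsLeafVertex T x →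
      ∃ y₁ y₂, y₁ ≠ y₂ ∧ T.Adj x y₁ ∧ T.Adj x y₂ := by
    rintro x ⟨y, hy⟩ hnl
    simp only [IsLeafVertex, ExistsUnique] at hnl
    push_neg at hnl
    obtain ⟨y', hy', hne⟩ := hnl y hy
    exact ⟨y', y, hne, hy', hy⟩
  have hnbr_s : ∀ x, x ∈ s → ∀ z, T.Adj x z → z ≠ u → z ∈ s := by
    intro x hx z hz hzu
    by_cases h' : z ∈ s
    · exact h'
    · rcases hnotin z h' with rfl | ⟨k1, k2⟩
      · exact absurd rfl hzu
      · exact absurd (hleafnbr_u z k1 k2 x hz.symm) hx.1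
  have hthird : ∀ x y₁ y₂, y₁ ≠ y₂ → T.Adj x y₁ → T.Adj x y₂ →
      ∃ y₃, T.Adj x y₃ ∧ y₃ ≠ y₁ ∧ y₃ ≠ y₂ := by
    intro x y₁ y₂ hne h1 h2
    by_contra hcon
    push_neg at hcon
    refine hno2 x ⟨y₁, y₂, hne, ?_⟩
    ext z
    simp only [mem_neighborSet, Set.mem_insert_iff, Set.mem_singleton_iff]
    constructor
    · intro hz
      by_cases hz1 : z = y₁
      · exact Or.inl hz1
      · exact Or.inr (hcon z hz hz1)
    · rintro (rfl | rfl) <;> assumption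
  have hleaf_up : ∀ (x : V) (hx : x ∈ s), IsLeafVertex T x →
      IsLeafVertex (T.induce s) ⟨x, hx⟩ := by
    rintro x hx ⟨y, hy, hyu⟩
    have hys : y ∈ s := hnbr_s x hx y hy (by
      rintro rfl
      exact hx.2 ⟨hy.symm, ⟨y, hy, hyu⟩⟩)
    exact ⟨⟨y, hys⟩, by exact hy, fun z hz => Subtype.ext (hyu ↑z hz)⟩
  have hleaf_down : ∀ (x : V) (hx : x ∈ s), IsLeafVertex (T.induce s) ⟨x, hx⟩ →
      IsLeafVertex T x := by
    rintro x hx ⟨y, hy, hyu⟩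
    have hyT : T.Adj x ↑y := hy
    have key : ∀ z, T.Adj x z → z ≠ u → z = ↑y := by
      intro z hz hzu
      exact congrArg Subtype.val (hyu ⟨z, hnbr_s x hx z hz hzu⟩ (by exact hz))
    have hall : ∀ z, T.Adj x z → z = ↑y := by
      intro z hz
      by_cases hzu : z = u
      · subst hzu
        exfalso
        have hxnl : ¬IsLeafVertex T x := fun hl => hx.2 ⟨hz.symm, hl⟩
        obtain ⟨y₁, y₂, hne, ha1, ha2⟩ := hnonleaf_two x ⟨z, hz⟩ hxnl
        obtain ⟨y₃, ha3, h31, h32⟩ := hthird x y₁ y₂ hne ha1 ha2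
        by_cases k1 : y₁ = z
        · subst k1
          exact h32 ((key y₃ ha3 h31).trans (key y₂ ha2 (Ne.symm hne)).symm)
        · by_cases k2 : y₂ = z
          · subst k2
            exact h31 ((key y₃ ha3 h32).trans (key y₁ ha1 k1).symm)
          · exact hne ((key y₁ ha1 k1).trans (key y₂ ha2 k2).symm)
      · exact key z hz hzu
    exact ⟨↑y, hyT, hall⟩
  have hsnt : ∀ x, x ∈ s → ∃ z, z ∈ s ∧ z ≠ x := by
    intro x hx
    obtain ⟨y, hy⟩ := GeoAux.exists_adj hc hnt x
    by_cases h : y ∈ s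
    · exact ⟨y, h, hy.ne'⟩
    · rcases hnotin y h with rfl | ⟨h1, h2⟩
      · have hxnl : ¬IsLeafVertex T x := fun hl => hx.2 ⟨hy.symm, hl⟩
        obtain ⟨y₁, y₂, hne, ha1, ha2⟩ := hnonleaf_two x ⟨y, hy⟩ hxnl
        have hzex : ∃ z, T.Adj x z ∧ z ≠ y := by
          by_cases k : y₁ = y
          · exact ⟨y₂, ha2, k ▸ hne.symm⟩
          · exact ⟨y₁, ha1, k⟩
        obtain ⟨z, hz1, hz2⟩ := hzex
        exact ⟨z, hnbr_s x hx z hz1 hz2, hz1.ne'⟩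
      · exact absurd (hleafnbr_u y h1 h2 x hy.symm) hx.1
  have hnontriv' : s.Nonempty → Nontrivial ↥s := by
    rintro ⟨x, hx⟩
    obtain ⟨z, hz, hne⟩ := hsnt x hx
    exact ⟨⟨z, hz⟩, ⟨x, hx⟩, fun hEq => hne (congrArg Subtype.val hEq)⟩
  -- transfers
  have hdown_set : ∀ t' : Set ↥s, IsMaxGeodesicSet (T.induce s) t' →
      IsMaxGeodesicSet T (Subtype.val '' t') := by
    rintro t' ⟨x, y, p', hmax, rfl⟩
    have hsne : s.Nonempty := ⟨↑x, x.2⟩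
    obtain ⟨hp', hxy, hlx, hly⟩ :=
      (GeoAux.maxgeo_iff (hconn' hsne) hac' (hnontriv' hsne) p').mp hmax
    refine ⟨↑x, ↑y, p'.map (SimpleGraph.Embedding.induce s).toHom, ?_, ?_⟩
    · refine (GeoAux.maxgeo_iff hc ha hnt _).mpr ?_
      exact ⟨SimpleGraph.Walk.map_isPath_of_injective hinj hp',
        fun h => hxy (Subtype.ext h),
        hleaf_down ↑x x.2 hlx, hleaf_down ↑y y.2 hly⟩
    · ext z
      simp only [Set.mem_image, Set.mem_setOf_eq, SimpleGraph.Walk.support_map,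
        List.mem_map]
      rw [iff_comm]
      exact Iff.trans (iff_of_eq (congrArg (z ∈ ·) (SimpleGraph.Walk.support_map _ p'))) List.mem_map
  have hsub_s : ∀ t : Set V, IsMaxGeodesicSet T t → u ∉ t → ∀ x ∈ t, x ∈ s := by
    rintro t ⟨a, b, p, hmax, rfl⟩ hu x hx
    obtain ⟨hp, hab, hla, hlb⟩ := (GeoAux.maxgeo_iff hc ha hnt p).mp hmax
    by_contra hxs
    rcases hnotin x hxs with rfl | ⟨h1, h2⟩
    · exact hu hx
    · rcases hleaf_endpoint p hp x hx h2 with rfl | rfl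
      · obtain ⟨n, hn, hnt'⟩ := GeoAux.exists_adj_support p hab
        refine hu ?_
        have : n ∈ p.support := List.mem_of_mem_tail hnt'
        rwa [hleafnbr_u x h1 h2 n hn] at this
      · obtain ⟨n, hn, hnt'⟩ := GeoAux.exists_adj_support p.reverse hab.symm
        refine hu ?_
        have hns : n ∈ p.support := by
          have := List.mem_of_mem_tail hnt'
          rwa [SimpleGraph.Walk.support_reverse, List.mem_reverse] at this
        rwa [hleafnbr_u x h1 h2 n hn] at hns
  have hup_set : ∀ t : Set V, IsMaxGeodesicSet T t → (∀ x ∈ t, x ∈ s) →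
      IsMaxGeodesicSet (T.induce s) (Subtype.val ⁻¹' t) := by
    rintro t ⟨a, b, p, hmax, rfl⟩ hts
    obtain ⟨hp, hab, hla, hlb⟩ := (GeoAux.maxgeo_iff hc ha hnt p).mp hmax
    have has : a ∈ s := hts a p.start_mem_support
    have hbs : b ∈ s := hts b p.end_mem_support
    obtain ⟨q, hq⟩ := GeoAux.lift_walk p has hbs (fun z hz => hts z hz)
    have hsne : s.Nonempty := ⟨a, has⟩
    refine ⟨⟨a, has⟩, ⟨b, hbs⟩, q, ?_, ?_⟩
    · rw [GeoAux.maxgeo_iff (hconn' hsne) hac' (hnontriv' hsne)]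
      refine ⟨?_, fun hEq => hab (congrArg Subtype.val hEq),
        hleaf_up a has hla, hleaf_up b hbs hlb⟩
      rw [← hq] at hp
      exact (SimpleGraph.Walk.map_isPath_iff_of_injective hinj).mp hp
    · ext z
      simp only [Set.mem_preimage, Set.mem_setOf_eq, ← hq,
        SimpleGraph.Walk.support_map, List.mem_map]
      refine Iff.trans (iff_of_eq (congrArg ((z : V) ∈ ·) (SimpleGraph.Walk.support_map _ q))) ?_
      rw [List.mem_map]
      constructor
      · rintro ⟨w, hw, hwz⟩
        rwa [← Subtype.ext hwz]
      · intro hz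
        exact ⟨z, hz, rfl⟩
  -- build packing of T from max packing of T' plus a geodesic outside s
  have hbuild : ∀ g : Set V, IsMaxGeodesicSet T g → (∀ x ∈ g, x ∉ s) →
      ∃ Psi : Finset (Set V), IsGeodesicPacking T ↑Psi ∧
        Psi.card = gpackNum (T.induce s) + 1 ∧ g ∈ Psi := by
    intro g hg hgs
    obtain ⟨P', hP', hcard⟩ := gpack_spec (T.induce s)
    set Q : Finset (Set V) := P'.image (fun t => Subtype.val '' t) with hQdef
    have hQmem : ∀ t ∈ Q, ∃ t' ∈ P', Subtype.val '' t' = t := by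
      intro t ht
      rw [hQdef, Finset.mem_image] at ht
      obtain ⟨t', ht', rfl⟩ := ht
      exact ⟨t', ht', rfl⟩
    have hQsub : ∀ t ∈ Q, ∀ x ∈ t, x ∈ s := by
      intro t ht x hx
      obtain ⟨t', -, rfl⟩ := hQmem t ht
      obtain ⟨w, -, rfl⟩ := hx
      exact w.2
    have hQcard : Q.card = P'.card :=
      Finset.card_image_of_injective _ (Set.image_injective.mpr Subtype.val_injective)
    have hgQ : g ∉ Q := by
      intro hgq
      obtain ⟨a, b, p, -, rfl⟩ := hg
      exact hgs a p.start_mem_support (hQsub _ hgq a p.start_mem_support)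
    refine ⟨insert g Q, ⟨?_, ?_⟩, ?_, Finset.mem_insert_self g Q⟩
    · intro t ht
      rw [Finset.coe_insert, Set.mem_insert_iff] at ht
      rcases ht with rfl | ht
      · exact hg
      · obtain ⟨t', ht', rfl⟩ := hQmem t ht
        exact hdown_set t' (hP'.1 t' ht')
    · rw [Finset.coe_insert]
      rw [Set.pairwise_insert_of_symmetric]
      constructor
      · intro t1 h1 t2 h2 hne12
        obtain ⟨t1', h1', rfl⟩ := hQmem t1 h1
        obtain ⟨t2', h2', rfl⟩ := hQmem t2 h2
        have hne' : t1' ≠ t2' := fun h => hne12 (by rw [h])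
        exact (Set.disjoint_image_iff Subtype.val_injective).mpr
          (hP'.2 h1' h2' hne')
      · intro t ht _
        rw [Set.disjoint_left]
        intro x hxg hxt
        exact hgs x hxg (hQsub t ht x hxt)
    · rw [Finset.card_insert_of_notMem hgQ, hQcard, hcard]
  -- upper bound
  have hupper : gpackNum T ≤ gpackNum (T.induce s) + 1 := by
    obtain ⟨P, hP, hcard⟩ := gpack_spec T
    set P₁ : Finset (Set V) := P.filter (fun t => u ∉ t) with hP₁def
    have hP₁sub : ∀ t ∈ P₁, ∀ x ∈ t, x ∈ s := by
      intro t ht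
      rw [hP₁def, Finset.mem_filter] at ht
      exact hsub_s t (hP.1 t ht.1) ht.2
    have hsplit : P.card ≤ P₁.card + 1 := by
      have h1 : (P.filter (fun t => u ∈ t)).card ≤ 1 := by
        rw [Finset.card_le_one]
        intro t1 h1 t2 h2
        rw [Finset.mem_filter] at h1 h2
        by_contra hne
        exact Set.disjoint_left.mp (hP.2 h1.1 h2.1 hne) h1.2 h2.2
      calc P.card = (P.filter (fun t => u ∉ t)).card +
            (P.filter (fun t => ¬ u ∉ t)).card :=
            (Finset.card_filter_add_card_filter_not _).symm
        _ ≤ P₁.card + 1 := by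
            rw [← hP₁def]
            gcongr
            calc (P.filter (fun t => ¬ u ∉ t)).card
                = (P.filter (fun t => u ∈ t)).card := by
                  congr 1
                  ext t
                  simp
              _ ≤ 1 := h1
    set f : Set V → Set ↥s := fun t => Subtype.val ⁻¹' t with hfdef
    have hval : ∀ t ∈ P₁, Subtype.val '' (f t) = t := by
      intro t ht
      rw [hfdef]
      apply Set.image_preimage_eq_of_subset
      rw [Subtype.range_coe]
      exact fun x hx => hP₁sub t ht x hx
    set P₂ : Finset (Set ↥s) := P₁.image f with hP₂def
    have hP₂card : P₂.card = P₁.card := by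
      apply Finset.card_image_of_injOn
      intro t1 h1 t2 h2 hEq
      rw [← hval t1 h1, ← hval t2 h2, hEq]
    have hpack₂ : IsGeodesicPacking (T.induce s) ↑P₂ := by
      constructor
      · intro t' ht'
        rw [hP₂def, Finset.coe_image, Set.mem_image] at ht'
        obtain ⟨t, ht, rfl⟩ := ht'
        rw [Finset.mem_coe] at ht
        have htP : t ∈ P := (Finset.mem_filter.mp (hP₁def ▸ ht)).1
        exact hup_set t (hP.1 t htP) (hP₁sub t ht)
      · intro t1' h1 t2' h2 hne
        rw [hP₂def, Finset.coe_image, Set.mem_image] at h1 h2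
        obtain ⟨t1, h1, rfl⟩ := h1
        obtain ⟨t2, h2, rfl⟩ := h2
        rw [Finset.mem_coe] at h1 h2
        have hne' : t1 ≠ t2 := fun h => hne (by rw [h])
        have ht1P : t1 ∈ P := (Finset.mem_filter.mp (hP₁def ▸ h1)).1
        have ht2P : t2 ∈ P := (Finset.mem_filter.mp (hP₁def ▸ h2)).1
        exact Disjoint.preimage _ (hP.2 ht1P ht2P hne')
    calc gpackNum T = P.card := hcard.symm
      _ ≤ P₁.card + 1 := hsplit
      _ = P₂.card + 1 := by rw [hP₂card]
      _ ≤ gpackNum (T.induce s) + 1 := by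
          gcongr
          exact le_gpack _ hpack₂
  -- special geodesic {u₁, u, u₂}
  have hspecial : ∀ u₁ u₂ : V, u₁ ≠ u₂ → T.Adj u u₁ → T.Adj u u₂ →
      IsLeafVertex T u₁ → IsLeafVertex T u₂ →
      IsMaxGeodesicSet T {u₁, u, u₂} ∧ (∀ x ∈ ({u₁, u, u₂} : Set V), x ∉ s) := by
    intro u₁ u₂ hne h1 h2 hl1 hl2
    constructor
    · refine ⟨u₁, u₂,
        SimpleGraph.Walk.cons h1.symm (SimpleGraph.Walk.cons h2 SimpleGraph.Walk.nil),
        ?_, ?_⟩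
      · rw [GeoAux.maxgeo_iff hc ha hnt]
        refine ⟨?_, hne, hl1, hl2⟩
        rw [SimpleGraph.Walk.cons_isPath_iff, SimpleGraph.Walk.cons_isPath_iff]
        simp only [SimpleGraph.Walk.isPath_iff_eq_nil, SimpleGraph.Walk.support_cons,
          SimpleGraph.Walk.support_nil]
        refine ⟨⟨trivial, ?_⟩, ?_⟩
        · simp [h2.ne]
        · simp [h1.ne', hne]
      · ext z
        simp only [SimpleGraph.Walk.support_cons, SimpleGraph.Walk.support_nil,
          Set.mem_insert_iff, Set.mem_singleton_iff, Set.mem_setOf_eq,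
          List.mem_cons, List.mem_singleton, List.not_mem_nil, or_false]
    · intro x hx
      rcases hx with rfl | rfl | rfl
      · exact hleafnbr_not _ h1 hl1
      · exact husnot
      · exact hleafnbr_not _ h2 hl2
  -- existence of some geodesic outside s
  have hg_exists : ∃ g : Set V, IsMaxGeodesicSet T g ∧ ∀ x ∈ g, x ∉ s := by
    by_cases hcase : ∃ w', T.Adj u w' ∧ IsLeafVertex T w' ∧ w' ≠ w₀
    · obtain ⟨w', k1, k2, k3⟩ := hcase
      obtain ⟨hh1, hh2⟩ := hspecial w₀ w' k3.symm hw₀adj k1 hw₀leaf k2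
      exact ⟨_, hh1, hh2⟩
    · push_neg at hcase
      have hul : IsLeafVertex T u := by
        refine ⟨w₀, hw₀adj, ?_⟩
        intro z hz
        by_cases hlz : IsLeafVertex T z
        · exact hcase z hz hlz
        · exfalso
          refine hno2 u ⟨w₀, z, ?_, ?_⟩
          · rintro rfl
            exact hlz hw₀leaf
          · ext y
            simp only [mem_neighborSet, Set.mem_insert_iff, Set.mem_singleton_iff]
            constructor
            · intro hy
              by_cases hly : IsLeafVertex T y
              · exact Or.inl (hcase y hy hly)
              · exact Or.inr (hend y z hy hz hly hlz)
            · rintro (rfl | rfl) <;> assumption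
      refine ⟨{x | x ∈ (SimpleGraph.Walk.cons hw₀adj SimpleGraph.Walk.nil).support},
        ⟨u, w₀, _, ?_, rfl⟩, ?_⟩
      · rw [GeoAux.maxgeo_iff hc ha hnt]
        refine ⟨?_, hw₀adj.ne, hul, hw₀leaf⟩
        rw [SimpleGraph.Walk.cons_isPath_iff]
        simp [hw₀adj.ne]
      · intro x hx
        simp only [Set.mem_setOf_eq, SimpleGraph.Walk.support_cons,
          SimpleGraph.Walk.support_nil, List.mem_cons, List.mem_singleton,
          List.not_mem_nil, or_false] at hx
        rcases hx with rfl | rfl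
        · exact husnot
        · exact hleafnbr_not _ hw₀adj hw₀leaf
  have hlower : gpackNum (T.induce s) + 1 ≤ gpackNum T := by
    obtain ⟨g, hg1, hg2⟩ := hg_exists
    obtain ⟨Psi, hPsi, hcard, -⟩ := hbuild g hg1 hg2
    rw [← hcard]
    exact le_gpack T hPsi
  have hmain : gpackNum T = gpackNum (T.induce s) + 1 := le_antisymm hupper hlower
  refine ⟨hmain, ?_⟩
  intro u₁ u₂ hne h1 h2 hl1 hl2
  obtain ⟨hset, hout⟩ := hspecial u₁ u₂ hne h1 h2 hl1 hl2
  obtain ⟨Psi, hPsi, hcard, hmem⟩ := hbuild _ hset hout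
  exact ⟨Psi, hPsi, by rw [hcard, ← hmain], hmem⟩
end

section
/- If P is a maximal geodesic in the strong product P_{d₁} ⊠ ⋯ ⊠ P_{d_r}, where r ≥ 2 and each d_i ≥ 2, then the number of vertices of P belongs to {d₁, …, d_r}. -/
open SimpleGraph

/-- The strong product of paths `P_{d 0} ⊠ ⋯ ⊠ P_{d (r-1)}` (a diagonal grid):
vertices are tuples, and distinct tuples are adjacent iff their coordinates differ
by at most `1` everywhere. -/
def strongGrid {r : ℕ} (d : Fin r → ℕ) : SimpleGraph (∀ i, Fin (d i)) where
  Adj x y := x ≠ y ∧ ∀ i, (x i : ℕ) ≤ (y i : ℕ) + 1 ∧ (y i : ℕ) ≤ (x i : ℕ) + 1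
  symm := by
    constructor
    rintro x y ⟨hne, h⟩
    exact ⟨hne.symm, fun i => ⟨(h i).2, (h i).1⟩⟩
  loopless := ⟨fun x h => h.1 rfl⟩


namespace StrongGridAux

variable {r : ℕ} {d : Fin r → ℕ}

/-- The sup-of-coordinate-distances function. -/
def gD (x y : ∀ i, Fin (d i)) : ℕ := Finset.univ.sup fun i => Nat.dist (x i : ℕ) (y i : ℕ)

lemma gD_le_iff {x y : ∀ i, Fin (d i)} {n : ℕ} :
    gD x y ≤ n ↔ ∀ i, Nat.dist (x i : ℕ) (y i : ℕ) ≤ n := by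
  simp [gD, Finset.sup_le_iff]

lemma gD_lower {x y : ∀ i, Fin (d i)} (p : (strongGrid d).Walk x y) : gD x y ≤ p.length := by
  induction p with
  | nil =>
    rw [SimpleGraph.Walk.length_nil, Nat.le_zero, gD]
    simp [Nat.dist_self]
  | @cons a b c h q ih =>
    rw [gD_le_iff]
    intro i
    have h1 := h.2 i
    have h2 := gD_le_iff.mp ih i
    simp only [Nat.dist] at *
    simp only [SimpleGraph.Walk.length_cons]
    omega

lemma gD_upper : ∀ (n : ℕ) (x y : ∀ i, Fin (d i)), gD x y ≤ n →
    ∃ p : (strongGrid d).Walk x y, p.length ≤ n := by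
  intro n
  induction n with
  | zero =>
    intro x y h
    have hxy : x = y := funext fun i => Fin.ext (by
      have := gD_le_iff.mp h i
      simp only [Nat.dist] at this; omega)
    subst hxy
    exact ⟨SimpleGraph.Walk.nil, le_refl 0⟩
  | succ n ih =>
    intro x y h
    by_cases hxy : x = y
    · subst hxy; exact ⟨SimpleGraph.Walk.nil, by simp⟩
    · have hf : ∀ i, (if (x i : ℕ) < y i then (x i : ℕ) + 1
          else if (y i : ℕ) < x i then (x i : ℕ) - 1 else (x i : ℕ)) < d i := by
        intro i
        have := (x i).isLt
        have := (y i).isLt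
        split_ifs <;> omega
      set x' : ∀ i, Fin (d i) := fun i => ⟨_, hf i⟩ with hx'
      obtain ⟨j, hj⟩ := Function.ne_iff.mp hxy
      have hjv : (x j : ℕ) ≠ y j := fun hv => hj (Fin.ext hv)
      have hne : x ≠ x' := by
        intro he
        have := congrFun he j
        rw [Fin.ext_iff] at this
        simp only [hx'] at this
        split_ifs at this <;> omega
      have hadj : (strongGrid d).Adj x x' := by
        refine ⟨hne, fun i => ?_⟩
        simp only [hx']
        split_ifs <;> omega
      have hD : gD x' y ≤ n := by
        rw [gD_le_iff]
        intro i
        have := gD_le_iff.mp h i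
        simp only [Nat.dist, hx'] at *
        split_ifs <;> omega
      obtain ⟨q, hq⟩ := ih x' y hD
      exact ⟨SimpleGraph.Walk.cons hadj q, by simpa using Nat.succ_le_succ hq⟩

lemma strongGrid_dist (x y : ∀ i, Fin (d i)) : (strongGrid d).dist x y = gD x y := by
  obtain ⟨p, hp⟩ := gD_upper (gD x y) x y le_rfl
  refine le_antisymm ((SimpleGraph.dist_le p).trans hp) ?_
  obtain ⟨q, hq⟩ := (Reachable.exists_walk_length_eq_dist ⟨p⟩ : _)
  rw [← hq]
  exact gD_lower q

lemma dist_support_le {V : Type*} {G : SimpleGraph V} {u v x : V} (p : G.Walk u v)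
    (hx : x ∈ p.support) : G.dist x v ≤ p.length := by
  induction p with
  | nil => simp_all [SimpleGraph.dist_self]
  | @cons a b c h q ih =>
    rw [SimpleGraph.Walk.support_cons, List.mem_cons] at hx
    rcases hx with rfl | hx
    · exact SimpleGraph.dist_le (SimpleGraph.Walk.cons h q)
    · exact (ih hx).trans (by simp)

lemma isGeodesic_reverse {V : Type*} {G : SimpleGraph V} {u v : V} {p : G.Walk u v}
    (h : IsGeodesic G p) : IsGeodesic G p.reverse :=
  ⟨h.1.reverse, by rw [SimpleGraph.Walk.length_reverse, SimpleGraph.dist_comm]; exact h.2⟩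

lemma isMaxGeodesic_reverse {V : Type*} {G : SimpleGraph V} {u v : V} {p : G.Walk u v}
    (hp : IsMaxGeodesic G p) : IsMaxGeodesic G p.reverse := by
  refine ⟨isGeodesic_reverse hp.1, ?_, ?_⟩
  · intro w h hg
    apply hp.2.2 w h.symm
    have h2 := isGeodesic_reverse hg
    rwa [SimpleGraph.Walk.reverse_cons, SimpleGraph.Walk.reverse_reverse] at h2
  · intro w h hg
    apply hp.2.1 w h.symm
    have h2 := isGeodesic_reverse hg
    rwa [SimpleGraph.Walk.reverse_concat, SimpleGraph.Walk.reverse_reverse] at h2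

/-- If the maximum coordinate gap is attained at `i` with `v i ≤ u i`, then by maximality
at the `u`-end, `u i` is at the top boundary. -/
lemma block_up {u v : ∀ i, Fin (d i)} (p : (strongGrid d).Walk u v)
    (hp : IsMaxGeodesic (strongGrid d) p) (i : Fin r) (hle : (v i : ℕ) ≤ u i)
    (hmax : gD u v = Nat.dist (u i : ℕ) (v i : ℕ)) : (u i : ℕ) = d i - 1 := by
  by_contra hne
  have hub : (u i : ℕ) + 1 < d i := by have := (u i).isLt; omega
  classical
  set w : ∀ j, Fin (d j) := Function.update u i ⟨(u i : ℕ) + 1, hub⟩ with hw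
  have hwval : ∀ j, (w j : ℕ) = if j = i then (u i : ℕ) + 1 else (u j : ℕ) := by
    intro j
    by_cases hj : j = i
    · subst hj; simp [hw]
    · simp [hw, Function.update_apply, hj]
  have hwi : (w i : ℕ) = (u i : ℕ) + 1 := by rw [hwval i, if_pos rfl]
  have hmax' : (u i : ℕ) - v i + ((v i : ℕ) - u i) = gD u v := by
    rw [hmax, Nat.dist]
  have hadj : (strongGrid d).Adj w u := by
    refine ⟨fun he => ?_, fun j => ?_⟩
    · have h0 := congrFun he i
      rw [Fin.ext_iff] at h0
      omega
    · by_cases hj : j = i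
      · subst hj; omega
      · have h1 : (w j : ℕ) = u j := by rw [hwval j, if_neg hj]
        omega
  have hdist_i : Nat.dist (w i : ℕ) (v i : ℕ) = gD u v + 1 := by
    rw [Nat.dist, hwi]; omega
  have hwd : gD w v = gD u v + 1 := by
    refine le_antisymm (gD_le_iff.mpr fun j => ?_) ?_
    · by_cases hj : j = i
      · subst hj; omega
      · have h1 : (w j : ℕ) = u j := by rw [hwval j, if_neg hj]
        have h2 := gD_le_iff.mp (le_refl (gD u v)) j
        rw [Nat.dist] at h2 ⊢
        omega
    · rw [← hdist_i, gD]
      exact Finset.le_sup (f := fun j => Nat.dist (w j : ℕ) (v j : ℕ)) (Finset.mem_univ i)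
  have hplen : p.length = gD u v := by rw [hp.1.2, strongGrid_dist]
  apply hp.2.1 w hadj
  constructor
  · rw [SimpleGraph.Walk.cons_isPath_iff]
    refine ⟨hp.1.1, fun hmem => ?_⟩
    have hle2 := dist_support_le p hmem
    rw [strongGrid_dist, hwd, hplen] at hle2
    omega
  · rw [SimpleGraph.Walk.length_cons, strongGrid_dist, hwd, hplen]

/-- Dual version: `u i ≤ v i` and the gap attained at `i` forces `u i = 0`. -/
lemma block_down {u v : ∀ i, Fin (d i)} (p : (strongGrid d).Walk u v)
    (hp : IsMaxGeodesic (strongGrid d) p) (i : Fin r) (hle : (u i : ℕ) ≤ v i)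
    (hmax : gD u v = Nat.dist (u i : ℕ) (v i : ℕ)) : (u i : ℕ) = 0 := by
  by_contra hne
  have hub : (u i : ℕ) - 1 < d i := by have := (u i).isLt; omega
  classical
  set w : ∀ j, Fin (d j) := Function.update u i ⟨(u i : ℕ) - 1, hub⟩ with hw
  have hwval : ∀ j, (w j : ℕ) = if j = i then (u i : ℕ) - 1 else (u j : ℕ) := by
    intro j
    by_cases hj : j = i
    · subst hj; simp [hw]
    · simp [hw, Function.update_apply, hj]
  have hwi : (w i : ℕ) = (u i : ℕ) - 1 := by rw [hwval i, if_pos rfl]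
  have hmax' : (u i : ℕ) - v i + ((v i : ℕ) - u i) = gD u v := by
    rw [hmax, Nat.dist]
  have hune : (u i : ℕ) ≠ 0 := hne
  have hadj : (strongGrid d).Adj w u := by
    refine ⟨fun he => ?_, fun j => ?_⟩
    · have h0 := congrFun he i
      rw [Fin.ext_iff] at h0
      omega
    · by_cases hj : j = i
      · subst hj; omega
      · have h1 : (w j : ℕ) = u j := by rw [hwval j, if_neg hj]
        omega
  have hdist_i : Nat.dist (w i : ℕ) (v i : ℕ) = gD u v + 1 := by
    rw [Nat.dist, hwi]; omega
  have hwd : gD w v = gD u v + 1 := by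
    refine le_antisymm (gD_le_iff.mpr fun j => ?_) ?_
    · by_cases hj : j = i
      · subst hj; omega
      · have h1 : (w j : ℕ) = u j := by rw [hwval j, if_neg hj]
        have h2 := gD_le_iff.mp (le_refl (gD u v)) j
        rw [Nat.dist] at h2 ⊢
        omega
    · rw [← hdist_i, gD]
      exact Finset.le_sup (f := fun j => Nat.dist (w j : ℕ) (v j : ℕ)) (Finset.mem_univ i)
  have hplen : p.length = gD u v := by rw [hp.1.2, strongGrid_dist]
  apply hp.2.1 w hadj
  constructor
  · rw [SimpleGraph.Walk.cons_isPath_iff]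
    refine ⟨hp.1.1, fun hmem => ?_⟩
    have hle2 := dist_support_le p hmem
    rw [strongGrid_dist, hwd, hplen] at hle2
    omega
  · rw [SimpleGraph.Walk.length_cons, strongGrid_dist, hwd, hplen]

lemma gD_comm (x y : ∀ i, Fin (d i)) : gD x y = gD y x := by
  simp [gD, Nat.dist_comm]

end StrongGridAux

open StrongGridAux in
theorem strongGrid_maxGeodesic_card (r : ℕ) (d : Fin (r + 2) → ℕ)
    (hd : ∀ i, 2 ≤ d i) {u v : ∀ i, Fin (d i)} (p : (strongGrid d).Walk u v)
    (hp : IsMaxGeodesic (strongGrid d) p) :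
    ∃ i, p.support.length = d i := by
  obtain ⟨i, -, hi⟩ := Finset.exists_mem_eq_sup Finset.univ ⟨0, Finset.mem_univ 0⟩
    (fun i => Nat.dist (u i : ℕ) (v i : ℕ))
  have hi' : gD u v = Nat.dist (u i : ℕ) (v i : ℕ) := hi
  have hrev := isMaxGeodesic_reverse hp
  have hlen : p.support.length = p.length + 1 := SimpleGraph.Walk.length_support p
  have hplen : p.length = gD u v := by rw [hp.1.2, strongGrid_dist]
  have hdge : 2 ≤ d i := hd i
  refine ⟨i, ?_⟩
  rcases le_total ((v i : ℕ)) ((u i : ℕ)) with hle | hle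
  · have hu := block_up p hp i hle hi'
    have hv := block_down p.reverse hrev i hle (by rw [gD_comm, hi', Nat.dist_comm])
    simp only [Nat.dist] at hi'
    omega
  · have hu := block_down p hp i hle hi'
    have hv := block_up p.reverse hrev i hle (by rw [gD_comm, hi', Nat.dist_comm])
    simp only [Nat.dist] at hi'
    omega
end
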